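/- arXiv:1307.5658 — 4 statements merged into one kernel-verified Lean document; each statement's English description precedes it below -/
import Mathlib

section
/- If (A, a) is a preadic ring with a finitely generated, then the completion Λ_a(A) = lim_n A/aⁿ is a noetherian ring if and only if A/a is a noetherian ring. -/
open AdicCompletion

section Part1

variable {A : Type*} [CommRing A] (a : Ideal A)

/-- The filtration on the adic completion by kernels of evaluation. -/
noncomputable def Fker (n : ℕ) : Ideal (AdicCompletion a A) := RingHom.ker (evalₐ a n)

theorem mem_Fker {n : ℕ} {x : AdicCompletion a A} : x ∈ Fker a n ↔ evalₐ a n x = 0 :=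
  RingHom.mem_ker

theorem evalₐ_eq_of_le {m n : ℕ} (hmn : m ≤ n) (y : AdicCompletion a A) (t : A)
    (h : evalₐ a n y = Ideal.Quotient.mk _ t) :
    evalₐ a m y = Ideal.Quotient.mk _ t := by
  obtain ⟨r, rfl⟩ := AdicCompletion.mk_surjective a A y
  rw [evalₐ_mk] at h ⊢
  rw [← AdicCompletion.Ideal.mk_eq_mk a hmn r]
  rw [Ideal.Quotient.mk_eq_mk_iff_sub_mem] at h ⊢
  exact Ideal.pow_le_pow_right hmn h

theorem Fker_mono {m n : ℕ} (hmn : m ≤ n) : Fker a n ≤ Fker a m := by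
  intro x hx
  rw [mem_Fker] at hx ⊢
  have := evalₐ_eq_of_le a hmn x 0 (by simpa using hx)
  simpa using this

theorem evalₐ_mem_map_of_mem_Fker {m n : ℕ} (hmn : m ≤ n) {x : AdicCompletion a A}
    (hx : x ∈ Fker a m) :
    evalₐ a n x ∈ (a ^ m).map (Ideal.Quotient.mk (a ^ n)) := by
  obtain ⟨r, rfl⟩ := AdicCompletion.mk_surjective a A x
  rw [mem_Fker, evalₐ_mk, ← AdicCompletion.Ideal.mk_eq_mk a hmn r,
    Ideal.Quotient.eq_zero_iff_mem] at hx
  rw [evalₐ_mk]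
  exact Ideal.mem_map_of_mem _ hx

theorem Fker_mul_mem {j k : ℕ} {x y : AdicCompletion a A}
    (hx : x ∈ Fker a j) (hy : y ∈ Fker a k) : x * y ∈ Fker a (j + k) := by
  rw [mem_Fker, map_mul]
  have h1 := evalₐ_mem_map_of_mem_Fker a (Nat.le_add_right j k) hx
  have h2 := evalₐ_mem_map_of_mem_Fker a (Nat.le_add_left k j) hy
  have : evalₐ a (j + k) x * evalₐ a (j + k) y ∈
      ((a ^ j).map (Ideal.Quotient.mk (a ^ (j + k)))) *
      ((a ^ k).map (Ideal.Quotient.mk (a ^ (j + k)))) :=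
    Ideal.mul_mem_mul h1 h2
  rwa [← Ideal.map_mul, ← pow_add, Ideal.map_quotient_self, Ideal.mem_bot] at this

theorem algebraMap_mem_Fker {n : ℕ} {t : A} (ht : t ∈ a ^ n) :
    algebraMap A (AdicCompletion a A) t ∈ Fker a n := by
  rw [mem_Fker, AlgHom.commutes, Ideal.Quotient.algebraMap_eq,
    Ideal.Quotient.eq_zero_iff_mem]
  exact ht

theorem eq_zero_of_forall_mem_Fker {x : AdicCompletion a A} (h : ∀ n, x ∈ Fker a n) :
    x = 0 := by
  obtain ⟨r, rfl⟩ := AdicCompletion.mk_surjective a A x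
  apply AdicCompletion.mk_zero_of
  refine ⟨0, fun n _ => ⟨n, le_rfl, n, le_rfl, ?_⟩⟩
  have := h n
  rw [mem_Fker, evalₐ_mk, Ideal.Quotient.eq_zero_iff_mem] at this
  have hsmul : (a ^ n • ⊤ : Submodule A A) = (a ^ n : Ideal A) := by ext x; simp
  rw [hsmul]
  exact this

theorem evalₐ_algebraMap_mul {k m n : ℕ} (hk : k + 1 ≤ n) (hn : n ≤ k + 1 + m)
    {y : AdicCompletion a A} {t s : A} (hy : evalₐ a (k + 1) y = Ideal.Quotient.mk _ t)
    (hs : s ∈ a ^ m) :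
    evalₐ a n (algebraMap A (AdicCompletion a A) s * y) = Ideal.Quotient.mk _ (s * t) := by
  obtain ⟨u, hu⟩ := Ideal.Quotient.mk_surjective (evalₐ a n y)
  have h1 : evalₐ a (k + 1) y = Ideal.Quotient.mk _ u := evalₐ_eq_of_le a hk y u hu.symm
  rw [h1, Ideal.Quotient.mk_eq_mk_iff_sub_mem] at hy
  rw [map_mul, AlgHom.commutes, Ideal.Quotient.algebraMap_eq, ← hu, ← map_mul,
    Ideal.Quotient.mk_eq_mk_iff_sub_mem]
  have : s * u - s * t = s * (u - t) := by ring
  rw [this]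
  have hmem : s * (u - t) ∈ a ^ m * a ^ (k + 1) := Ideal.mul_mem_mul hs hy
  rw [← pow_add] at hmem
  exact Ideal.pow_le_pow_right (by omega) hmem

/-- Completeness of the adic completion with respect to the kernel filtration. -/
theorem exists_limit (z : ℕ → AdicCompletion a A)
    (hz : ∀ n, z (n + 1) - z n ∈ Fker a n) :
    ∃ w : AdicCompletion a A, ∀ n, w - z n ∈ Fker a n := by
  have hchain : ∀ m n, m ≤ n → z n - z m ∈ Fker a m := by
    intro m n hmn
    induction n, hmn using Nat.le_induction with
    | base => simp only [sub_self]; exact zero_mem _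
    | succ n hmn ih =>
      have : z (n + 1) - z m = (z (n + 1) - z n) + (z n - z m) := by ring
      rw [this]
      exact add_mem (Fker_mono a hmn (hz n)) ih
  choose r hr using fun n => AdicCompletion.mk_surjective a A (z n)
  have key : ∀ m n, m ≤ n →
      Ideal.Quotient.mk (a ^ m) ((r n).val m) = Ideal.Quotient.mk (a ^ m) ((r m).val m) := by
    intro m n hmn
    have h1 : evalₐ a m (z n) = evalₐ a m (z m) := by
      have := hchain m n hmn
      rw [mem_Fker, map_sub, sub_eq_zero] at this
      exact this
    rw [← hr n, ← hr m, evalₐ_mk, evalₐ_mk] at h1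
    exact h1
  have hcauchy : AdicCompletion.IsAdicCauchy a A (fun n => (r n).val n) := by
    intro m n hmn
    show _ ≡ _ [SMOD (a ^ m • ⊤ : Submodule A A)]
    have hsmul : (a ^ m • ⊤ : Submodule A A) = (a ^ m : Ideal A) := by ext x; simp
    rw [SModEq.def, hsmul]
    show Submodule.Quotient.mk _ = Submodule.Quotient.mk _
    rw [Ideal.Quotient.mk_eq_mk, Ideal.Quotient.mk_eq_mk]
    have h2 : Ideal.Quotient.mk (a ^ m) ((r n).val m) =
        Ideal.Quotient.mk (a ^ m) ((r n).val n) :=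
      (AdicCompletion.Ideal.mk_eq_mk a hmn (r n)).symm
    rw [← h2]
    exact (key m n hmn).symm
  refine ⟨AdicCompletion.mk a A ⟨fun n => (r n).val n, hcauchy⟩, fun n => ?_⟩
  rw [mem_Fker, map_sub, sub_eq_zero, ← hr n]
  exact (evalₐ_mk (I := a) n _).trans (evalₐ_mk (I := a) n (r n)).symm

end Part1
open AdicCompletion MvPolynomial

section Part2

variable {A : Type*} [CommRing A] (a : Ideal A)

-- ===== MvPolynomial lemmas =====

theorem prod_pow_mem_pow {ι : Type*} (s : Finset ι) (m : ι → ℕ) (f : ι → A)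
    (hf : ∀ i ∈ s, f i ∈ a) :
    (∏ i ∈ s, f i ^ m i) ∈ a ^ (∑ i ∈ s, m i) := by
  classical
  induction s using Finset.induction with
  | empty => simp [Ideal.one_eq_top]
  | @insert i s hi ih =>
    rw [Finset.prod_insert hi, Finset.sum_insert hi, pow_add]
    exact Ideal.mul_mem_mul (Ideal.pow_mem_pow (hf i (Finset.mem_insert_self i s)) _)
      (ih fun j hj => hf j (Finset.mem_insert_of_mem hj))

variable {N : ℕ} (x : Fin N → A)

theorem aeval_mem_pow_of_isHomogeneous (hx : Ideal.span (Set.range x) = a)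
    {n : ℕ} {p : MvPolynomial (Fin N) A}
    (hp : p.IsHomogeneous n) : aeval x p ∈ a ^ n := by
  rw [p.as_sum, map_sum]
  apply Submodule.sum_mem
  intro u hu
  rw [aeval_monomial]
  have hdeg : u.degree = n := by
    by_contra hne
    exact (MvPolynomial.mem_support_iff.mp hu) (hp.coeff_eq_zero hne)
  have hprod : (u.prod fun i k => x i ^ k) ∈ a ^ n := by
    rw [Finsupp.prod]
    have := prod_pow_mem_pow a u.support u (fun i => x i) (fun i _ => by
      rw [← hx]; exact Submodule.subset_span (Set.mem_range_self i))
    rwa [← hdeg]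
  simpa using Ideal.mul_mem_left _ _ hprod

theorem exists_isHomogeneous_aeval_eq (hx : Ideal.span (Set.range x) = a) {n : ℕ} {t : A} (ht : t ∈ a ^ n) :
    ∃ p : MvPolynomial (Fin N) A, p.IsHomogeneous n ∧ aeval x p = t := by
  induction n generalizing t with
  | zero => exact ⟨C t, isHomogeneous_C _ _, by simp⟩
  | succ n ih =>
    rw [pow_succ] at ht
    refine Submodule.mul_induction_on ht ?_ ?_
    · intro v hv s hs
      obtain ⟨p, hp, hpe⟩ := ih hv
      rw [← hx] at hs
      rw [← Ideal.submodule_span_eq, Submodule.mem_span_range_iff_exists_fun] at hs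
      obtain ⟨cf, hcf⟩ := hs
      refine ⟨p * ∑ i, C (cf i) * X i, ?_, ?_⟩
      · have h1 : (∑ i, C (cf i) * X i : MvPolynomial (Fin N) A).IsHomogeneous 1 :=
          MvPolynomial.IsHomogeneous.sum _ _ _ fun i _ => isHomogeneous_C_mul_X _ _
        exact hp.mul h1
      · rw [map_mul, hpe, map_sum]
        simp only [map_mul, aeval_C, aeval_X, Algebra.algebraMap_self, RingHom.id_apply]
        rw [← hcf]
        simp [smul_eq_mul]
    · rintro v w ⟨p, hp, hpe⟩ ⟨q, hq, hqe⟩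
      exact ⟨p + q, hp.add hq, by rw [map_add, hpe, hqe]⟩

theorem homogeneousComponent_mul_homogeneous {σ : Type*} (q h : MvPolynomial σ A) {j n : ℕ}
    (hh : h.IsHomogeneous j) (hj : j ≤ n) :
    homogeneousComponent n (q * h) = homogeneousComponent (n - j) q * h := by
  classical
  conv_lhs => rw [q.as_sum]
  conv_rhs => rw [q.as_sum]
  rw [Finset.sum_mul, map_sum, map_sum, Finset.sum_mul]
  apply Finset.sum_congr rfl
  intro u _
  by_cases hc : u.degree + j = n
  · have h1 : (monomial u (coeff u q) * h) ∈ homogeneousSubmodule σ A n := by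
      rw [mem_homogeneousSubmodule]
      exact hc ▸ (isHomogeneous_monomial _ rfl).mul hh
    have h2 : (monomial u (coeff u q)) ∈ homogeneousSubmodule σ A (n - j) := by
      rw [mem_homogeneousSubmodule]
      exact isHomogeneous_monomial _ (by omega)
    rw [homogeneousComponent_of_mem h1, homogeneousComponent_of_mem h2, if_pos rfl, if_pos rfl]
  · have h1 : homogeneousComponent n (monomial u (coeff u q) * h) = 0 := by
      apply homogeneousComponent_eq_zero'
      intro d hd
      have hsub := MvPolynomial.support_mul (monomial u (coeff u q)) h hd
      rw [Finset.mem_add] at hsub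
      obtain ⟨v, hv, w, hw, rfl⟩ := hsub
      have hvu : v = u := by
        have := MvPolynomial.support_monomial_subset hv
        simpa using this
      have hwj : w.degree = j := by
        by_contra hne
        exact (MvPolynomial.mem_support_iff.mp hw) (hh.coeff_eq_zero hne)
      subst hvu
      have hdeg : (v + w).degree = v.degree + w.degree := by
        simp [Finsupp.degree_eq_weight_one, map_add]
      rw [hdeg, hwj]
      exact hc
    have h2 : homogeneousComponent (n - j) (monomial u (coeff u q)) = 0 := by
      apply homogeneousComponent_eq_zero'
      intro d hd
      have hvu : d = u := by
        have := MvPolynomial.support_monomial_subset hd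
        simpa using this
      rw [hvu]
      omega
    rw [h1, h2, zero_mul]

end Part2
section Part3

variable {A : Type*} [CommRing A] (a : Ideal A)

/-- A finite `A`-module killed by `a` is Noetherian over `A` if `A ⧸ a` is Noetherian. -/
theorem isNoetherian_of_torsion (hN : IsNoetherianRing (A ⧸ a))
    (M : Type*) [AddCommGroup M] [Module A M]
    (tors : ∀ r ∈ a, ∀ x : M, r • x = (0 : M)) (hfin : Module.Finite A M) :
    IsNoetherian A M := by
  have htors : Module.IsTorsionBySet A M a := by
    rintro x ⟨r, hr⟩
    exact tors r hr x
  letI : Module (A ⧸ a) M := htors.module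
  haveI : IsScalarTower A (A ⧸ a) M := htors.isScalarTower
  haveI : Module.Finite (A ⧸ a) M := Module.Finite.of_restrictScalars_finite A (A ⧸ a) M
  haveI hnoeth : IsNoetherian (A ⧸ a) M := isNoetherian_of_isNoetherianRing_of_finite _ _
  rw [isNoetherian_def]
  intro S
  let S' : Submodule (A ⧸ a) M :=
    { carrier := S
      add_mem' := fun h1 h2 => S.add_mem h1 h2
      zero_mem' := S.zero_mem
      smul_mem' := by
        intro c y hy
        obtain ⟨r, rfl⟩ := Ideal.Quotient.mk_surjective c
        rw [htors.mk_smul]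
        exact S.smul_mem r hy }
  obtain ⟨F, hF⟩ := (hnoeth.noetherian S')
  refine ⟨F, le_antisymm (Submodule.span_le.mpr ?_) ?_⟩
  · intro y hy
    have : y ∈ S' := hF ▸ Submodule.subset_span hy
    exact this
  · intro y hy
    have hy' : y ∈ Submodule.span (A ⧸ a) (F : Set M) := by rw [hF]; exact hy
    refine Submodule.span_induction ?_ ?_ ?_ ?_ hy'
    · exact fun z hz => Submodule.subset_span hz
    · exact Submodule.zero_mem _
    · exact fun z w _ _ hz hw => Submodule.add_mem _ hz hw
    · intro c z _ hz
      obtain ⟨r, rfl⟩ := Ideal.Quotient.mk_surjective c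
      rw [htors.mk_smul]
      exact Submodule.smul_mem _ r hz

theorem isNoetherian_quotient_pow (hN : IsNoetherianRing (A ⧸ a)) (ha : a.FG) (n : ℕ) :
    IsNoetherian A (A ⧸ (a ^ n • ⊤ : Submodule A A)) := by
  induction n with
  | zero =>
    have h0 : (a ^ 0 • ⊤ : Submodule A A) = ⊤ := by simp
    haveI : Subsingleton (A ⧸ (a ^ 0 • ⊤ : Submodule A A)) :=
      Submodule.Quotient.subsingleton_iff.mpr h0
    infer_instance
  | succ n ih =>
    let g := AdicCompletion.transitionMap a A (Nat.le_succ n)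
    have hker : LinearMap.ker g = (a ^ n • ⊤ : Submodule A A).map
        (Submodule.mkQ (a ^ (n+1) • ⊤ : Submodule A A)) := by
      ext y
      obtain ⟨t, rfl⟩ := Submodule.mkQ_surjective _ y
      simp only [LinearMap.mem_ker, Submodule.mkQ_apply]
      rw [show g (Submodule.Quotient.mk t) = Submodule.Quotient.mk t from rfl]
      constructor
      · intro h
        rw [Submodule.Quotient.mk_eq_zero] at h
        exact Submodule.mem_map_of_mem h
      · rintro ⟨s, hs, hst⟩
        have : Submodule.Quotient.mk (p := (a ^ (n+1) • ⊤ : Submodule A A)) s =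
            Submodule.Quotient.mk t := hst
        rw [Submodule.Quotient.eq] at this
        rw [Submodule.Quotient.mk_eq_zero]
        have ht' : t = s - (s - t) := by ring
        rw [ht']
        exact Submodule.sub_mem _ hs
          (Submodule.smul_mono_left (Ideal.pow_le_pow_right (Nat.le_succ n)) this)
    haveI hkerN : IsNoetherian A ↥(LinearMap.ker g) := by
      rw [hker]
      have hfg : ((a ^ n • ⊤ : Submodule A A).map
          (Submodule.mkQ (a ^ (n+1) • ⊤ : Submodule A A))).FG := by
        apply Submodule.FG.map
        have hst : (a ^ n • ⊤ : Submodule A A) = (a ^ n : Ideal A) := by ext x; simp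
        rw [hst]
        exact Submodule.FG.pow ha n
      haveI : Module.Finite A
          ↥((a ^ n • ⊤ : Submodule A A).map (Submodule.mkQ (a ^ (n+1) • ⊤ : Submodule A A))) :=
        Module.Finite.iff_fg.mpr hfg
      apply isNoetherian_of_torsion a hN
      · rintro r hr ⟨y, hy⟩
        obtain ⟨t, ht, rfl⟩ := hy
        apply Subtype.ext
        show r • Submodule.mkQ (a ^ (n+1) • ⊤ : Submodule A A) t = 0
        rw [← map_smul, Submodule.mkQ_apply, Submodule.Quotient.mk_eq_zero]
        have hst : (a ^ n • ⊤ : Submodule A A) = (a ^ n : Ideal A) := by ext x; simp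
        rw [hst] at ht
        have : r • t ∈ a ^ (n + 1) := by
          rw [smul_eq_mul, pow_succ']
          exact Ideal.mul_mem_mul hr ht
        have hst2 : (a ^ (n+1) • ⊤ : Submodule A A) = (a ^ (n+1) : Ideal A) := by ext x; simp
        rw [hst2]
        exact this
      · infer_instance
    haveI : IsNoetherian A (A ⧸ (a ^ n • ⊤ : Submodule A A)) := ih
    exact isNoetherian_of_range_eq_ker (LinearMap.ker g).subtype g
      (by rw [Submodule.range_subtype])

theorem fg_of_pow_le (hN : IsNoetherianRing (A ⧸ a)) (ha : a.FG) {n : ℕ} {W : Ideal A}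
    (hW : a ^ n ≤ W) : W.FG := by
  haveI := isNoetherian_quotient_pow a hN ha n
  apply Submodule.fg_of_fg_map_of_fg_inf_ker (Submodule.mkQ (a ^ n • ⊤ : Submodule A A))
  · exact IsNoetherian.noetherian _
  · rw [Submodule.ker_mkQ]
    have hst : (a ^ n • ⊤ : Submodule A A) = (a ^ n : Ideal A) := by ext x; simp
    rw [hst, inf_eq_right.mpr hW]
    exact Submodule.FG.pow ha n

end Part3

section Part4

open AdicCompletion MvPolynomial

variable {A : Type*} [CommRing A] (a : Ideal A) (I : Ideal (AdicCompletion a A))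

/-- The ideal of leading terms of degree `n` of the ideal `I` of the completion. -/
noncomputable def Tld (n : ℕ) : Ideal A where
  carrier := {t | ∃ y, y ∈ I ∧ y ∈ Fker a n ∧ evalₐ a (n + 1) y = Ideal.Quotient.mk _ t}
  add_mem' := by
    rintro s t ⟨y, hyI, hyF, hy⟩ ⟨z, hzI, hzF, hz⟩
    exact ⟨y + z, add_mem hyI hzI, add_mem hyF hzF, by rw [map_add, hy, hz, map_add]⟩
  zero_mem' := ⟨0, zero_mem _, zero_mem _, by simp⟩
  smul_mem' := by
    rintro c t ⟨y, hyI, hyF, hy⟩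
    refine ⟨algebraMap A _ c * y, Ideal.mul_mem_left _ _ hyI, Ideal.mul_mem_left _ _ hyF, ?_⟩
    rw [map_mul, AlgHom.commutes, Ideal.Quotient.algebraMap_eq, hy, ← map_mul]
    rfl

theorem mem_Tld {n : ℕ} {t : A} :
    t ∈ Tld a I n ↔
      ∃ y, y ∈ I ∧ y ∈ Fker a n ∧ evalₐ a (n + 1) y = Ideal.Quotient.mk _ t :=
  Iff.rfl

theorem Tld_le_pow (n : ℕ) : Tld a I n ≤ a ^ n := by
  rintro t ⟨y, _, hyF, hy⟩
  have h1 := evalₐ_eq_of_le a (Nat.le_succ n) y t hy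
  rw [mem_Fker] at hyF
  rw [hyF, eq_comm, Ideal.Quotient.eq_zero_iff_mem] at h1
  exact h1

theorem pow_succ_le_Tld (n : ℕ) : a ^ (n + 1) ≤ Tld a I n := by
  intro t ht
  exact ⟨0, zero_mem _, zero_mem _, by
    rw [_root_.map_zero, eq_comm, Ideal.Quotient.eq_zero_iff_mem]; exact ht⟩

theorem mul_mem_Tld {n : ℕ} {s t : A} (hs : s ∈ a) (ht : t ∈ Tld a I n) :
    s * t ∈ Tld a I (n + 1) := by
  obtain ⟨y, hyI, hyF, hy⟩ := ht
  refine ⟨algebraMap A _ s * y, Ideal.mul_mem_left _ _ hyI, ?_, ?_⟩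
  · have h1 : algebraMap A (AdicCompletion a A) s ∈ Fker a 1 :=
      algebraMap_mem_Fker a (by rwa [pow_one])
    have := Fker_mul_mem a h1 hyF
    rwa [add_comm] at this
  · exact evalₐ_algebraMap_mul a (k := n) (m := 1) (n := n + 2) (by omega) (by omega) hy (by rwa [pow_one])

theorem pow_mul_Tld_le (m n : ℕ) : a ^ m * Tld a I n ≤ Tld a I (n + m) := by
  induction m with
  | zero =>
    rw [pow_zero, one_mul]
    exact le_rfl
  | succ m ih =>
    rw [pow_succ, mul_comm (a ^ m) a, mul_assoc]
    rw [Ideal.mul_le]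
    intro s hs u hu
    have h1 : u ∈ Tld a I (n + m) := ih hu
    have := mul_mem_Tld a I hs h1
    rwa [show n + m + 1 = n + (m + 1) by omega] at this

theorem Tld_stab (hN : IsNoetherianRing (A ⧸ a)) {N : ℕ} (x : Fin N → A)
    (hx : Ideal.span (Set.range x) = a) :
    ∃ d : ℕ, ∀ n, d ≤ n → Tld a I (n + 1) ≤ a * Tld a I n + a ^ (n + 2) := by
  classical
  haveI := hN
  set H : ℕ → Set (MvPolynomial (Fin N) A) :=
    fun j => {p | p.IsHomogeneous j ∧ aeval x p ∈ Tld a I j} with hH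
  set Gset : ℕ → Set (MvPolynomial (Fin N) A) :=
    fun k => (⋃ j ∈ {j : ℕ | j ≤ k}, H j) ∪ (MvPolynomial.C '' (a : Set A)) with hGset
  set G : ℕ → Ideal (MvPolynomial (Fin N) A) := fun k => Ideal.span (Gset k) with hG
  have hGmono : Monotone G := by
    intro k k' hk
    apply Ideal.span_mono
    apply Set.union_subset_union_left
    apply Set.biUnion_subset_biUnion_left
    intro j hj
    exact le_trans hj hk
  set red := (MvPolynomial.map (σ := Fin N) (Ideal.Quotient.mk a)) with hred
  have hredsurj : Function.Surjective red :=
    MvPolynomial.map_surjective _ Ideal.Quotient.mk_surjective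
  have hker : ∀ k, RingHom.ker red ≤ G k := by
    intro k
    rw [hred, MvPolynomial.ker_map, Ideal.mk_ker, Ideal.map_le_iff_le_comap]
    intro r hr
    exact Ideal.subset_span (Or.inr ⟨r, hr, rfl⟩)
  have hcomap : ∀ k, Ideal.comap red ((G k).map red) = G k := by
    intro k
    rw [Ideal.comap_map_of_surjective red hredsurj]
    exact sup_eq_left.mpr (hker k)
  obtain ⟨d, hd⟩ := monotone_stabilizes_iff_noetherian.mpr
    (inferInstance : IsNoetherian (MvPolynomial (Fin N) (A ⧸ a)) (MvPolynomial (Fin N) (A ⧸ a)))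
    ⟨fun k => (G k).map red, fun k k' hk => Ideal.map_mono (hGmono hk)⟩
  have hGeq : ∀ n, d ≤ n → G n = G d := by
    intro n hn
    rw [← hcomap n, ← hcomap d]
    have := hd n hn
    change (G d).map red = (G n).map red at this
    rw [this]
  refine ⟨d, fun n hn t ht => ?_⟩
  have ht' : t ∈ a ^ (n + 1) := Tld_le_pow a I (n + 1) ht
  obtain ⟨p, hp, hpe⟩ := exists_isHomogeneous_aeval_eq a x hx ht'
  have hpG : p ∈ G (n + 1) := by
    apply Ideal.subset_span
    left
    refine Set.mem_biUnion (show n + 1 ∈ {j : ℕ | j ≤ n + 1} by simp) ⟨hp, hpe ▸ ht⟩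
  have hpGn : p ∈ G n := by
    rwa [hGeq (n + 1) (by omega), ← hGeq n hn] at hpG
  have hpGn' : p ∈ Submodule.span (MvPolynomial (Fin N) A) (Gset n) := by
    rw [Ideal.submodule_span_eq]
    exact hpGn
  obtain ⟨cf, hsupp, hsum⟩ := Submodule.mem_span_set.mp hpGn'
  rw [Finsupp.sum] at hsum
  have hcomp : homogeneousComponent (n + 1) p = p := by
    rw [homogeneousComponent_of_mem ((mem_homogeneousSubmodule _ _).mpr hp), if_pos rfl]
  have ht2 : t = ∑ q ∈ cf.support, aeval x (homogeneousComponent (n + 1) (cf q • q)) := by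
    rw [← hpe, ← hcomp, ← hsum, map_sum, map_sum]
  rw [ht2]
  apply Submodule.sum_mem
  intro q hq
  have hqmem := hsupp hq
  rw [smul_eq_mul]
  rcases hqmem with hql | hqr
  · simp only [Set.mem_iUnion] at hql
    obtain ⟨j, hj, hqh, hqT⟩ := hql
    have hj' : j ≤ n := hj
    rw [homogeneousComponent_mul_homogeneous (cf q) q hqh (by omega), map_mul]
    have h1 : aeval x (homogeneousComponent (n + 1 - j) (cf q)) ∈ a ^ (n + 1 - j) :=
      aeval_mem_pow_of_isHomogeneous a x hx (homogeneousComponent_isHomogeneous _ _)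
    have h2 : aeval x (homogeneousComponent (n + 1 - j) (cf q)) * aeval x q ∈
        a ^ (n + 1 - j) * Tld a I j := Ideal.mul_mem_mul h1 hqT
    apply Submodule.mem_sup_left
    have h3 : a ^ (n + 1 - j) * Tld a I j ≤ a * Tld a I n := by
      have he : n + 1 - j = (n - j) + 1 := by omega
      rw [he, pow_succ', mul_assoc]
      apply Ideal.mul_mono_right
      have := pow_mul_Tld_le a I (n - j) j
      rwa [show j + (n - j) = n by omega] at this
    exact h3 h2
  · obtain ⟨c₀, hc₀, rfl⟩ := hqr
    rw [homogeneousComponent_mul_homogeneous (cf (C c₀)) (C c₀) (isHomogeneous_C _ _)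
      (by omega), map_mul, aeval_C]
    apply Submodule.mem_sup_right
    have h1 : aeval x (homogeneousComponent (n + 1 - 0) (cf (C c₀))) ∈ a ^ (n + 1) := by
      have := aeval_mem_pow_of_isHomogeneous a x hx
        (homogeneousComponent_isHomogeneous (n + 1 - 0) (cf (C c₀)))
      rwa [show n + 1 - 0 = n + 1 by omega] at this
    have h2 : algebraMap A A c₀ ∈ a := by simpa using hc₀
    have := Ideal.mul_mem_mul h1 h2
    rwa [← pow_succ] at this

end Part4

section Part5

open AdicCompletion

variable {A : Type*} [CommRing A] (a : Ideal A)

theorem hard_direction (hN : IsNoetherianRing (A ⧸ a)) (ha : a.FG) :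
    IsNoetherianRing (AdicCompletion a A) := by
  classical
  rw [isNoetherianRing_iff_ideal_fg]
  intro I
  obtain ⟨N, x, hx0⟩ := Submodule.fg_iff_exists_fin_generating_family.mp ha
  have hx : Ideal.span (Set.range x) = a := by rw [← hx0, Ideal.submodule_span_eq]
  obtain ⟨d, hd⟩ := Tld_stab a I hN x hx
  have hTfg : ∀ k : Fin (d + 1), (Tld a I (k : ℕ)).FG := fun k =>
    fg_of_pow_le a hN ha (pow_succ_le_Tld a I (k : ℕ))
  choose gens hgens using hTfg
  have hgmem : ∀ (k : Fin (d + 1)) {u : A}, u ∈ gens k → u ∈ Tld a I (k : ℕ) := by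
    intro k u hu
    rw [← hgens k]
    exact Submodule.subset_span hu
  have hylift : ∀ (k : Fin (d + 1)) (u : A), u ∈ gens k → ∃ y, y ∈ I ∧ y ∈ Fker a (k : ℕ) ∧
      evalₐ a ((k : ℕ) + 1) y = Ideal.Quotient.mk _ u :=
    fun k u hu => (mem_Tld a I).mp (hgmem k hu)
  choose! y hyI hyF hyev using hylift
  -- the decomposition lemma for leading term ideals
  have decomp : ∀ n (t : A), t ∈ Tld a I n →
      ∃ c : Fin (d + 1) → A → A, (∀ (k : Fin (d + 1)) (u : A), c k u ∈ a ^ (n - (k : ℕ))) ∧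
        t - (∑ k : Fin (d + 1), ∑ u ∈ gens k, c k u * u) ∈ a ^ (n + 1) := by
    have direct : ∀ n, n ≤ d → ∀ t ∈ Tld a I n,
        ∃ c : Fin (d + 1) → A → A, (∀ (k : Fin (d + 1)) (u : A), c k u ∈ a ^ (n - (k : ℕ))) ∧
          t - (∑ k : Fin (d + 1), ∑ u ∈ gens k, c k u * u) ∈ a ^ (n + 1) := by
      intro n hn t ht
      have hkn : n < d + 1 := by omega
      set kn : Fin (d + 1) := ⟨n, hkn⟩ with hknn
      have ht' : t ∈ Submodule.span A (↑(gens kn) : Set A) := by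
        rw [Ideal.submodule_span_eq, hgens kn]
        exact ht
      rw [Submodule.mem_span_finset] at ht'
      obtain ⟨f, -, hf⟩ := ht'
      refine ⟨fun k u => if k = kn then f u else 0, ?_, ?_⟩
      · intro k u
        show (if k = kn then f u else 0) ∈ a ^ (n - (k : ℕ))
        by_cases h : k = kn
        · rw [if_pos h, h]
          simp [hknn, Nat.sub_self]
        · rw [if_neg h]
          exact zero_mem _
      · have hsum : (∑ k : Fin (d + 1), ∑ u ∈ gens k, (if k = kn then f u else 0) * u)
            = ∑ u ∈ gens kn, f u * u := by
          rw [Finset.sum_eq_single_of_mem kn (Finset.mem_univ _)]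
          · simp
          · intro k _ hk
            apply Finset.sum_eq_zero
            intro u _
            rw [if_neg hk, zero_mul]
        rw [hsum]
        have : (∑ u ∈ gens kn, f u * u) = t := by
          rw [← hf]
          apply Finset.sum_congr rfl
          intro u _
          rw [smul_eq_mul]
        rw [this, sub_self]
        exact zero_mem _
    intro n
    induction n with
    | zero => exact direct 0 (by omega)
    | succ m ih =>
      by_cases hcase : m + 1 ≤ d
      · exact direct (m + 1) hcase
      · intro t ht
        have hdm : d ≤ m := by omega
        have hsub := hd m hdm ht
        rw [Submodule.add_eq_sup, Submodule.mem_sup] at hsub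
        obtain ⟨w, hw, r, hr, hwr⟩ := hsub
        have claim : ∀ w ∈ a * Tld a I m,
            ∃ c : Fin (d + 1) → A → A, (∀ (k : Fin (d + 1)) (u : A), c k u ∈ a ^ (m + 1 - (k : ℕ))) ∧
              w - (∑ k : Fin (d + 1), ∑ u ∈ gens k, c k u * u) ∈ a ^ (m + 2) := by
          intro w hw
          refine Submodule.mul_induction_on hw ?_ ?_
          · intro s hs v hv
            obtain ⟨c', hc', hrem'⟩ := ih v hv
            refine ⟨fun k u => s * c' k u, ?_, ?_⟩
            · intro k u
              have hk : (k : ℕ) ≤ m := le_trans k.is_le hdm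
              have : s * c' k u ∈ a * a ^ (m - (k : ℕ)) := Ideal.mul_mem_mul hs (hc' k u)
              rwa [← pow_succ', show (m - (k : ℕ)) + 1 = m + 1 - (k : ℕ) by omega] at this
            · have hsumeq : (∑ k : Fin (d + 1), ∑ u ∈ gens k, (s * c' k u) * u)
                  = s * ∑ k : Fin (d + 1), ∑ u ∈ gens k, c' k u * u := by
                rw [Finset.mul_sum]
                apply Finset.sum_congr rfl
                intro k _
                rw [Finset.mul_sum]
                apply Finset.sum_congr rfl
                intro u _
                ring
              rw [hsumeq, ← mul_sub]
              have := Ideal.mul_mem_mul hs hrem'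
              rwa [← pow_succ', show (m + 1) + 1 = m + 2 by omega] at this
          · rintro w₁ w₂ ⟨c₁, hc₁, hrem₁⟩ ⟨c₂, hc₂, hrem₂⟩
            refine ⟨fun k u => c₁ k u + c₂ k u, ?_, ?_⟩
            · intro k u
              exact add_mem (hc₁ k u) (hc₂ k u)
            · have : (∑ k : Fin (d + 1), ∑ u ∈ gens k, (c₁ k u + c₂ k u) * u)
                  = (∑ k : Fin (d + 1), ∑ u ∈ gens k, c₁ k u * u)
                    + (∑ k : Fin (d + 1), ∑ u ∈ gens k, c₂ k u * u) := by
                rw [← Finset.sum_add_distrib]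
                apply Finset.sum_congr rfl
                intro k _
                rw [← Finset.sum_add_distrib]
                apply Finset.sum_congr rfl
                intro u _
                ring
              rw [this, show w₁ + w₂ - ((∑ k : Fin (d + 1), ∑ u ∈ gens k, c₁ k u * u)
                + (∑ k : Fin (d + 1), ∑ u ∈ gens k, c₂ k u * u))
                = (w₁ - ∑ k : Fin (d + 1), ∑ u ∈ gens k, c₁ k u * u)
                  + (w₂ - ∑ k : Fin (d + 1), ∑ u ∈ gens k, c₂ k u * u) by ring]
              exact add_mem hrem₁ hrem₂
        obtain ⟨c, hc, hrem⟩ := claim w hw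
        refine ⟨c, hc, ?_⟩
        rw [← hwr, show w + r - (∑ k : Fin (d + 1), ∑ u ∈ gens k, c k u * u)
          = (w - ∑ k : Fin (d + 1), ∑ u ∈ gens k, c k u * u) + r by ring]
        exact add_mem hrem hr
  -- the successive approximation step
  have step : ∀ n (z : AdicCompletion a A), z ∈ I → z ∈ Fker a n →
      ∃ c : Fin (d + 1) → A → A, (∀ (k : Fin (d + 1)) (u : A), c k u ∈ a ^ (n - (k : ℕ))) ∧
        (z - ∑ k : Fin (d + 1), ∑ u ∈ gens k,
          algebraMap A (AdicCompletion a A) (c k u) * y k u) ∈ I ∧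
        (z - ∑ k : Fin (d + 1), ∑ u ∈ gens k,
          algebraMap A (AdicCompletion a A) (c k u) * y k u) ∈ Fker a (n + 1) := by
    intro n z hzI hzF
    obtain ⟨t, ht⟩ := Ideal.Quotient.mk_surjective (evalₐ a (n + 1) z)
    have htT : t ∈ Tld a I n := ⟨z, hzI, hzF, ht.symm⟩
    obtain ⟨c, hc, hrem⟩ := decomp n t htT
    refine ⟨c, hc, ?_, ?_⟩
    · apply Submodule.sub_mem _ hzI
      apply Ideal.sum_mem
      intro k _
      apply Ideal.sum_mem
      intro u hu
      exact Ideal.mul_mem_left _ _ (hyI k u hu)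
    · rw [mem_Fker, map_sub]
      have hterm : ∀ k : Fin (d + 1), ∀ u ∈ gens k,
          evalₐ a (n + 1) (algebraMap A (AdicCompletion a A) (c k u) * y k u)
            = Ideal.Quotient.mk _ (c k u * u) := by
        intro k u hu
        by_cases hk : (k : ℕ) ≤ n
        · exact evalₐ_algebraMap_mul a (k := (k : ℕ)) (m := n - (k : ℕ)) (n := n + 1)
            (by omega) (by omega) (hyev k u hu) (hc k u)
        · have h1 : y k u ∈ Fker a (n + 1) := Fker_mono a (by omega) (hyF k u hu)
          have h2 : algebraMap A (AdicCompletion a A) (c k u) * y k u ∈ Fker a (n + 1) :=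
            Ideal.mul_mem_left _ _ h1
          rw [mem_Fker] at h2
          rw [h2, eq_comm, Ideal.Quotient.eq_zero_iff_mem]
          have hu' : u ∈ a ^ (k : ℕ) := Tld_le_pow a I _ (hgmem k hu)
          exact Ideal.mul_mem_left _ _ (Ideal.pow_le_pow_right (by omega) hu')
      have hsum : evalₐ a (n + 1) (∑ k : Fin (d + 1), ∑ u ∈ gens k,
          algebraMap A (AdicCompletion a A) (c k u) * y k u)
            = Ideal.Quotient.mk _ (∑ k : Fin (d + 1), ∑ u ∈ gens k, c k u * u) := by
        rw [map_sum, map_sum]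
        apply Finset.sum_congr rfl
        intro k _
        rw [map_sum, map_sum]
        apply Finset.sum_congr rfl
        intro u hu
        exact hterm k u hu
      rw [hsum, ← ht, ← map_sub, Ideal.Quotient.eq_zero_iff_mem]
      exact hrem
  -- now construct, for z ∈ I, an expression of z in terms of the y's
  refine ⟨(Finset.univ : Finset (Fin (d + 1))).biUnion (fun k => (gens k).image (y k)),
    le_antisymm ?_ ?_⟩
  · rw [Ideal.span_le]
    intro w hw
    simp only [Finset.coe_biUnion, Finset.coe_univ, Set.mem_univ, Set.iUnion_true,
      Finset.coe_image, Set.mem_iUnion, Set.mem_image, Finset.mem_coe] at hw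
    obtain ⟨k, u, hu, rfl⟩ := hw
    exact hyI k u hu
  · intro z hzI
    have hz0 : z ∈ Fker a 0 := by
      rw [mem_Fker]
      haveI : Subsingleton (A ⧸ (a ^ 0 : Ideal A)) := by
        rw [pow_zero, Ideal.one_eq_top]
        exact Submodule.Quotient.subsingleton_iff.mpr rfl
      exact Subsingleton.elim _ _
    -- the sequence of approximations
    let zs : (n : ℕ) → {w : AdicCompletion a A // w ∈ I ∧ w ∈ Fker a n} := fun n =>
      Nat.rec ⟨z, hzI, hz0⟩ (fun n w =>
        ⟨w.1 - ∑ k : Fin (d + 1), ∑ u ∈ gens k,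
            algebraMap A (AdicCompletion a A) ((step n w.1 w.2.1 w.2.2).choose k u) * y k u,
          (step n w.1 w.2.1 w.2.2).choose_spec.2.1,
          (step n w.1 w.2.1 w.2.2).choose_spec.2.2⟩) n
    let cs : ℕ → Fin (d + 1) → A → A := fun n =>
      (step n (zs n).1 (zs n).2.1 (zs n).2.2).choose
    have hcs : ∀ (n : ℕ) (k : Fin (d + 1)) (u : A), cs n k u ∈ a ^ (n - (k : ℕ)) := fun n =>
      (step n (zs n).1 (zs n).2.1 (zs n).2.2).choose_spec.1
    have hzs : ∀ n, (zs (n + 1)).1 = (zs n).1 - ∑ k : Fin (d + 1), ∑ u ∈ gens k,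
        algebraMap A (AdicCompletion a A) (cs n k u) * y k u := fun n => rfl
    let Sc : ℕ → Fin (d + 1) → A → A := fun n k u => ∑ m ∈ Finset.range n, cs m k u
    have hzsum : ∀ n, (zs n).1 = z - ∑ k : Fin (d + 1), ∑ u ∈ gens k,
        algebraMap A (AdicCompletion a A) (Sc n k u) * y k u := by
      intro n
      induction n with
      | zero => simp [Sc, zs]
      | succ n ih =>
        rw [hzs n, ih]
        have hSc : ∀ k u, Sc (n + 1) k u = Sc n k u + cs n k u := by
          intro k u
          simp only [Sc]
          rw [Finset.sum_range_succ]
        have : (∑ k : Fin (d + 1), ∑ u ∈ gens k,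
            algebraMap A (AdicCompletion a A) (Sc (n + 1) k u) * y k u)
            = (∑ k : Fin (d + 1), ∑ u ∈ gens k,
              algebraMap A (AdicCompletion a A) (Sc n k u) * y k u)
              + (∑ k : Fin (d + 1), ∑ u ∈ gens k,
                algebraMap A (AdicCompletion a A) (cs n k u) * y k u) := by
          rw [← Finset.sum_add_distrib]
          apply Finset.sum_congr rfl
          intro k _
          rw [← Finset.sum_add_distrib]
          apply Finset.sum_congr rfl
          intro u _
          rw [hSc, map_add]
          ring
        rw [this]
        ring
    -- limits of the coefficients
    have hlim : ∀ (k : Fin (d + 1)) (u : A), ∃ w : AdicCompletion a A,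
        ∀ n, w - algebraMap A (AdicCompletion a A) (Sc (n + (k : ℕ)) k u) ∈ Fker a n := by
      intro k u
      apply exists_limit
      intro n
      have hdiff : Sc (n + 1 + (k : ℕ)) k u - Sc (n + (k : ℕ)) k u = cs (n + (k : ℕ)) k u := by
        simp only [Sc]
        rw [show n + 1 + (k : ℕ) = (n + (k : ℕ)) + 1 by omega, Finset.sum_range_succ]
        ring
      rw [← map_sub, hdiff]
      apply algebraMap_mem_Fker
      have := hcs (n + (k : ℕ)) k u
      rwa [show n + (k : ℕ) - (k : ℕ) = n by omega] at this
    choose L hL using hlim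
    have hzL : z - ∑ k : Fin (d + 1), ∑ u ∈ gens k, L k u * y k u = 0 := by
      apply eq_zero_of_forall_mem_Fker
      have key : ∀ n, d ≤ n →
          z - (∑ k : Fin (d + 1), ∑ u ∈ gens k, L k u * y k u) ∈ Fker a n := by
        intro n hn
        have h2 : z - (∑ k : Fin (d + 1), ∑ u ∈ gens k, L k u * y k u)
            = (zs n).1 - ∑ k : Fin (d + 1), ∑ u ∈ gens k,
              (L k u - algebraMap A (AdicCompletion a A) (Sc n k u)) * y k u := by
          rw [hzsum n]
          simp only [sub_mul, Finset.sum_sub_distrib]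
          ring
        rw [h2]
        apply Submodule.sub_mem _ (zs n).2.2
        apply Ideal.sum_mem
        intro k _
        apply Ideal.sum_mem
        intro u hu
        have hk : (k : ℕ) ≤ n := le_trans k.is_le hn
        have h3 := hL k u (n - (k : ℕ))
        rw [show (n - (k : ℕ)) + (k : ℕ) = n by omega] at h3
        have h4 : y k u ∈ Fker a (k : ℕ) := hyF k u hu
        have h5 := Fker_mul_mem a h3 h4
        rwa [show (n - (k : ℕ)) + (k : ℕ) = n by omega] at h5
      intro n
      exact Fker_mono a (le_max_left n d) (key (max n d) (le_max_right n d))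
    rw [show z = ∑ k : Fin (d + 1), ∑ u ∈ gens k, L k u * y k u from by
      rw [← sub_eq_zero]; exact hzL]
    apply Ideal.sum_mem
    intro k _
    apply Ideal.sum_mem
    intro u hu
    apply Ideal.mul_mem_left
    apply Ideal.subset_span
    simp only [Finset.coe_biUnion, Finset.coe_univ, Set.mem_univ, Set.iUnion_true,
      Finset.coe_image, Set.mem_iUnion, Set.mem_image, Finset.mem_coe]
    exact ⟨k, u, hu, rfl⟩

theorem easy_direction (h : IsNoetherianRing (AdicCompletion a A)) :
    IsNoetherianRing (A ⧸ a) := by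
  have hsurj : Function.Surjective (evalₐ a 1) := by
    intro w
    obtain ⟨v, hv⟩ := Ideal.Quotient.mk_surjective w
    refine ⟨algebraMap A _ v, ?_⟩
    rw [AlgHom.commutes, Ideal.Quotient.algebraMap_eq, hv]
  have h1 : IsNoetherianRing (A ⧸ a ^ 1) :=
    isNoetherianRing_of_surjective _ _ (evalₐ a 1).toRingHom hsurj
  exact isNoetherianRing_of_ringEquiv _ (Ideal.quotEquivOfEq (pow_one a))

end Part5

/-- If `(A, a)` is a preadic ring with `a` finitely generated, then the
`a`-adic completion `Λ_a(A) = lim_n A/aⁿ` is a noetherian ring if and only if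
`A/a` is a noetherian ring. -/
theorem isNoetherianRing_adicCompletion_iff {A : Type*} [CommRing A]
    (a : Ideal A) (ha : a.FG) :
    IsNoetherianRing (AdicCompletion a A) ↔ IsNoetherianRing (A ⧸ a) := by
  constructor
  · exact easy_direction a
  · exact fun hN => hard_direction a hN ha
end

section
/- Let k be a noetherian ring and A a noetherian adic k-algebra (with defining ideal a) such that A/a is essentially of finite type over k. If (B, b) is an adic ring which is an essentially formally of finite type (A, a)-algebra (i.e., B/b is essentially of finite type over A), then B is a noetherian ring. -/
open Polynomial

set_option maxHeartbeats 1600000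
set_option synthInstance.maxHeartbeats 400000

universe u

section Aux
variable {R : Type u} [CommRing R] (I J : Ideal R)




set_option maxHeartbeats 800000 in
/-- The ideal of the Rees algebra of `I` consisting of polynomials all of whose
coefficients lie in `J`. -/
def reesIdeal : Ideal (reesAlgebra I) where
  carrier := {f | ∀ n, (f : R[X]).coeff n ∈ J}
  zero_mem' := by intro n; simp
  add_mem' := by
    intro f g hf hg n
    simpa using J.add_mem (hf n) (hg n)
  smul_mem' := by
    intro c f hf n
    have h : (((c * f : reesAlgebra I) : reesAlgebra I) : R[X]).coeff n
        = ∑ p ∈ Finset.HasAntidiagonal.antidiagonal n, (c : R[X]).coeff p.1 * (f : R[X]).coeff p.2 := by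
      rw [show ((c * f : reesAlgebra I) : R[X]) = (c : R[X]) * (f : R[X]) from rfl, coeff_mul]
    show (((c * f : reesAlgebra I) : reesAlgebra I) : R[X]).coeff n ∈ J
    rw [h]
    exact Ideal.sum_mem _ fun p _ => J.mul_mem_left _ (hf p.2)

set_option maxHeartbeats 800000 in
/-- The ideal of the Rees algebra of polynomials whose `n`-th coefficient lies in `I^(n+1)`. -/
def reesShift : Ideal (reesAlgebra I) where
  carrier := {f | ∀ n, (f : R[X]).coeff n ∈ I ^ (n + 1)}
  zero_mem' := by intro n; simp
  add_mem' := by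
    intro f g hf hg n
    simpa using (I ^ (n+1)).add_mem (hf n) (hg n)
  smul_mem' := by
    intro c f hf n
    have h : (((c * f : reesAlgebra I) : reesAlgebra I) : R[X]).coeff n
        = ∑ p ∈ Finset.HasAntidiagonal.antidiagonal n, (c : R[X]).coeff p.1 * (f : R[X]).coeff p.2 := by
      rw [show ((c * f : reesAlgebra I) : R[X]) = (c : R[X]) * (f : R[X]) from rfl, coeff_mul]
    show (((c * f : reesAlgebra I) : reesAlgebra I) : R[X]).coeff n ∈ I ^ (n + 1)
    rw [h]
    refine Ideal.sum_mem _ fun p hp => ?_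
    have h1 : (c : R[X]).coeff p.1 ∈ I ^ p.1 := (mem_reesAlgebra_iff I c).mp c.2 p.1
    have h2 : (f : R[X]).coeff p.2 ∈ I ^ (p.2 + 1) := hf p.2
    have he : I ^ p.1 * I ^ (p.2 + 1) = I ^ (n + 1) := by
      rw [← pow_add]
      congr 1
      have := Finset.HasAntidiagonal.mem_antidiagonal.mp hp
      omega
    exact he ▸ Ideal.mul_mem_mul h1 h2

lemma map_le_reesShift : I.map (algebraMap R (reesAlgebra I)) ≤ reesShift I := by
  rw [Ideal.map_le_iff_le_comap]
  intro a ha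
  show algebraMap R (reesAlgebra I) a ∈ reesShift I
  intro m
  show ((algebraMap R (reesAlgebra I) a : reesAlgebra I) : R[X]).coeff m ∈ _
  rw [show ((algebraMap R (reesAlgebra I) a : reesAlgebra I) : R[X]) = C a from rfl, coeff_C]
  split
  · next h => subst h; simpa using ha
  · simp



lemma noetherian_G (hI : I.FG) [IsNoetherianRing (R ⧸ I)] :
    IsNoetherianRing ((reesAlgebra I) ⧸ (I.map (algebraMap R (reesAlgebra I)))) := by
  set G := (reesAlgebra I) ⧸ (I.map (algebraMap R (reesAlgebra I)))
  have hft : Algebra.FiniteType R (reesAlgebra I) :=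
    ⟨(Subalgebra.fg_top _).mpr (reesAlgebra.fg hI)⟩
  have hftG : Algebra.FiniteType R G :=
    Algebra.FiniteType.of_surjective (Ideal.Quotient.mkₐ R _) (Ideal.Quotient.mkₐ_surjective R _)
  obtain ⟨ι, hfin, f, hf⟩ := (Algebra.FiniteType.iff_quotient_mvPolynomial' (R := R) (S := G)).mp hftG
  -- the algebra map R → G kills I
  have hker : ∀ a ∈ I, algebraMap R G a = 0 := by
    intro a ha
    have : algebraMap R G a = Ideal.Quotient.mk _ (algebraMap R (reesAlgebra I) a) := rfl
    rw [this, Ideal.Quotient.eq_zero_iff_mem]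
    exact Ideal.mem_map_of_mem _ ha
  -- lift to a ring hom from R⧸I
  let φ : R ⧸ I →+* G := Ideal.Quotient.lift I (algebraMap R G) hker
  let ψ : MvPolynomial ι (R ⧸ I) →+* G := MvPolynomial.eval₂Hom φ (fun i => f (MvPolynomial.X i))
  have hsurj : Function.Surjective ψ := by
    intro g
    obtain ⟨p, hp⟩ := hf g
    refine ⟨MvPolynomial.map (Ideal.Quotient.mk I) p, ?_⟩
    rw [← hp]
    show (ψ.comp (MvPolynomial.map (Ideal.Quotient.mk I))) p = f p
    have : ψ.comp (MvPolynomial.map (Ideal.Quotient.mk I))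
        = MvPolynomial.eval₂Hom (φ.comp (Ideal.Quotient.mk I)) (fun i => f (MvPolynomial.X i)) := by
      ext <;> simp [ψ]
    rw [this]
    have hφ : φ.comp (Ideal.Quotient.mk I) = algebraMap R G := by ext; simp [φ]
    rw [hφ]
    have h1 : (MvPolynomial.eval₂Hom (algebraMap R G) fun i => f (MvPolynomial.X i)) p
        = (MvPolynomial.aeval fun i => f (MvPolynomial.X i)) p := by
      rw [MvPolynomial.coe_eval₂Hom, MvPolynomial.aeval_def]
    rw [h1]
    conv_rhs => rw [MvPolynomial.aeval_unique (R := R) (S₁ := G) f]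
    rfl
  exact isNoetherianRing_of_surjective _ G ψ hsurj

lemma key_gens (hI : I.FG) [IsNoetherianRing (R ⧸ I)] :
    ∃ (ι : Type u) (_ : Fintype ι) (x : ι → R) (d : ι → ℕ),
      (∀ i, x i ∈ J) ∧
      ∀ N : ℕ, ∀ y ∈ J, y ∈ I ^ N →
        ∃ a : ι → R, (∀ i, a i ∈ I ^ (N - d i)) ∧ y - ∑ i, a i * x i ∈ I ^ (N + 1) := by
  classical
  set A' := reesAlgebra I
  set 𝔦 : Ideal A' := I.map (algebraMap R A') with h𝔦
  set mk : A' →+* A' ⧸ 𝔦 := Ideal.Quotient.mk 𝔦 with hmk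
  have hGnoeth : IsNoetherianRing (A' ⧸ 𝔦) := noetherian_G I hI
  set Q : Ideal (A' ⧸ 𝔦) := (reesIdeal I J).map mk with hQ
  obtain ⟨T, hT⟩ := (isNoetherianRing_iff_ideal_fg _).mp hGnoeth Q
  -- lift generators
  have hlift : ∀ t : {t // t ∈ T}, ∃ u : A', u ∈ reesIdeal I J ∧ mk u = (t : A' ⧸ 𝔦) := by
    intro t
    have ht : (t : A' ⧸ 𝔦) ∈ Q := by
      rw [← hT]; exact Ideal.subset_span t.2
    exact (Ideal.mem_map_iff_of_surjective mk Ideal.Quotient.mk_surjective).mp ht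
  set lift : {t // t ∈ T} → A' := fun t => (hlift t).choose with hliftdef
  have hlift1 : ∀ t, lift t ∈ reesIdeal I J := fun t => (hlift t).choose_spec.1
  have hlift2 : ∀ t, mk (lift t) = (t : A' ⧸ 𝔦) := fun t => (hlift t).choose_spec.2
  set D : ℕ := Finset.univ.sup (fun t : {t // t ∈ T} => ((lift t : R[X])).natDegree) with hD
  refine ⟨{t // t ∈ T} × Fin (D + 1), inferInstance,
    fun p => ((lift p.1 : R[X])).coeff p.2, fun p => (p.2 : ℕ), fun p => hlift1 p.1 p.2, ?_⟩
  intro N y hyJ hyI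
  set η : A' := ⟨(monomial N y : R[X]), reesAlgebra.monomial_mem.mpr hyI⟩ with hη
  have hηJ : η ∈ reesIdeal I J := by
    intro n
    show ((monomial N y : R[X])).coeff n ∈ J
    rw [coeff_monomial]
    split
    · exact hyJ
    · exact J.zero_mem
  have hηQ : mk η ∈ Ideal.span (T : Set (A' ⧸ 𝔦)) := by
    rw [hT]; exact Ideal.mem_map_of_mem _ hηJ
  obtain ⟨c, -, hc⟩ := Submodule.mem_span_finset.mp hηQ
  -- lift the coefficients
  have hzc : ∀ g : A' ⧸ 𝔦, ∃ u : A', mk u = g := Ideal.Quotient.mk_surjective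
  set z : A' ⧸ 𝔦 → A' := fun g => (hzc g).choose with hz
  have hz2 : ∀ g, mk (z g) = g := fun g => (hzc g).choose_spec
  set w : A' := η - ∑ t : {t // t ∈ T}, z (c (t : A' ⧸ 𝔦)) * lift t with hw
  have hwmem : w ∈ reesShift I := by
    apply map_le_reesShift I
    rw [← h𝔦]
    have : mk w = 0 := by
      rw [hw, map_sub, map_sum]
      have : ∀ t : {t // t ∈ T}, mk (z (c (t : A' ⧸ 𝔦)) * lift t)
          = c (t : A' ⧸ 𝔦) * (t : A' ⧸ 𝔦) := by
        intro t
        rw [map_mul, hz2, hlift2]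
      rw [Finset.sum_congr rfl (fun t _ => this t)]
      have hsum : ∑ t : {t // t ∈ T}, c (t : A' ⧸ 𝔦) * (t : A' ⧸ 𝔦) = ∑ t ∈ T, c t * t := by
        rw [Finset.univ_eq_attach]
        exact Finset.sum_attach T (fun t => c t * t)
      rw [hsum]
      have := hc
      simp only [smul_eq_mul] at this
      rw [this, sub_self]
    rwa [← Ideal.Quotient.eq_zero_iff_mem]
  -- now extract the coefficient at N
  have hcoeffN : ((w : A') : R[X]).coeff N ∈ I ^ (N + 1) := hwmem N
  refine ⟨fun p => if (p.2 : ℕ) ≤ N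
      then ((z (c (p.1 : A' ⧸ 𝔦)) : R[X])).coeff (N - (p.2 : ℕ)) else 0, ?_, ?_⟩
  · intro p
    dsimp only
    split
    · exact (mem_reesAlgebra_iff I _).mp (z (c (p.1 : A' ⧸ 𝔦))).2 _
    · exact Submodule.zero_mem _
  · -- the sum identity
    have hwc : ((w : A') : R[X]).coeff N
        = y - ∑ t : {t // t ∈ T}, ((z (c (t : A' ⧸ 𝔦)) * lift t : A') : R[X]).coeff N := by
      rw [hw]
      push_cast
      rw [coeff_sub, finset_sum_coeff]
      congr 1
      show ((monomial N y : R[X])).coeff N = y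
      rw [coeff_monomial, if_pos rfl]
    have hsum : ∑ p : {t // t ∈ T} × Fin (D + 1),
        (if (p.2 : ℕ) ≤ N then ((z (c (p.1 : A' ⧸ 𝔦)) : R[X])).coeff (N - (p.2 : ℕ)) else 0)
          * ((lift p.1 : R[X])).coeff p.2
        = ∑ t : {t // t ∈ T}, ((z (c (t : A' ⧸ 𝔦)) * lift t : A') : R[X]).coeff N := by
      rw [Fintype.sum_prod_type]
      refine Finset.sum_congr rfl (fun t _ => ?_)
      set Z : R[X] := (z (c (t : A' ⧸ 𝔦)) : R[X]) with hZ
      set F : R[X] := (lift t : R[X]) with hF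
      have hdeg : F.natDegree ≤ D := by
        rw [hF, hD]
        exact Finset.le_sup (f := fun t : {t // t ∈ T} => ((lift t : R[X])).natDegree) (Finset.mem_univ t)
      have hrhs : ((z (c (t : A' ⧸ 𝔦)) * lift t : A') : R[X]).coeff N
          = ∑ p ∈ Finset.HasAntidiagonal.antidiagonal N, Z.coeff p.1 * F.coeff p.2 := by
        rw [show ((z (c (t : A' ⧸ 𝔦)) * lift t : A') : R[X]) = Z * F from rfl, coeff_mul]
      rw [hrhs]
      set h : ℕ → R := fun l => (if l ≤ N then Z.coeff (N - l) else 0) * F.coeff l with hh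
      have hL : ∑ l : Fin (D + 1), (if (l : ℕ) ≤ N then Z.coeff (N - (l : ℕ)) else 0)
            * F.coeff (l : ℕ) = ∑ l ∈ Finset.range (D + 1), h l := by
        rw [Finset.sum_range fun l => h l]
      rw [hL]
      have hR : ∑ p ∈ Finset.HasAntidiagonal.antidiagonal N, Z.coeff p.1 * F.coeff p.2
          = ∑ l ∈ Finset.range (N + 1), h l := by
        rw [Finset.Nat.sum_antidiagonal_eq_sum_range_succ (fun k l => Z.coeff k * F.coeff l) N]
        rw [← Finset.sum_range_reflect]
        refine Finset.sum_congr rfl (fun j hj => ?_)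
        have hjN : j ≤ N := Nat.lt_succ_iff.mp (Finset.mem_range.mp hj)
        have h1 : N + 1 - 1 - j = N - j := by omega
        have h2 : N - (N - j) = j := by omega
        rw [h1, h2, hh]
        simp only [if_pos hjN]
      rw [hR]
      set M : ℕ := max D N with hM
      have e1 : ∑ l ∈ Finset.range (D + 1), h l = ∑ l ∈ Finset.range (M + 1), h l := by
        refine Finset.sum_subset (Finset.range_subset_range.mpr (by omega)) ?_
        intro l _ hl
        have hlD : D < l := by
          simp only [Finset.mem_range] at hl; omega
        have : F.coeff l = 0 := coeff_eq_zero_of_natDegree_lt (by omega)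
        rw [hh]
        simp [this]
      have e2 : ∑ l ∈ Finset.range (N + 1), h l = ∑ l ∈ Finset.range (M + 1), h l := by
        refine Finset.sum_subset (Finset.range_subset_range.mpr (by omega)) ?_
        intro l _ hl
        have hlN : N < l := by
          simp only [Finset.mem_range] at hl; omega
        rw [hh]
        simp only [if_neg (by omega : ¬ l ≤ N), zero_mul]
      rw [e1, e2]
    rw [hsum, ← hwc]
    exact hcoeffN


lemma smul_top_eq_pow (I : Ideal R) (n : ℕ) : (I ^ n • ⊤ : Submodule R R) = I ^ n := by
  rw [smul_eq_mul, Ideal.mul_top]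

lemma span_eq_of_approx (I : Ideal R) [IsAdicComplete I R] (J : Ideal R)
    (ι : Type*) [Fintype ι] (x : ι → R) (d : ι → ℕ)
    (hxJ : ∀ i, x i ∈ J)
    (H : ∀ N : ℕ, ∀ y ∈ J, y ∈ I ^ N →
      ∃ a : ι → R, (∀ i, a i ∈ I ^ (N - d i)) ∧ y - ∑ i, a i * x i ∈ I ^ (N + 1)) :
    J = Ideal.span (Set.range x) := by
  classical
  refine le_antisymm ?_ ?_
  swap
  · rw [Ideal.span_le]
    rintro _ ⟨i, rfl⟩
    exact hxJ i
  intro y hyJ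
  have key' : ∀ N : ℕ, ∀ z : R, z ∈ J → z ∈ I ^ N →
      ∃ a : ι → R, (∀ i, a i ∈ I ^ (N - d i)) ∧
        (z - ∑ i, a i * x i) ∈ J ∧ (z - ∑ i, a i * x i) ∈ I ^ (N + 1) := by
    intro N z hz1 hz2
    obtain ⟨a, ha1, ha2⟩ := H N z hz1 hz2
    exact ⟨a, ha1, J.sub_mem hz1 (Ideal.sum_mem _ fun i _ => J.mul_mem_left _ (hxJ i)), ha2⟩
  have hy0 : y ∈ I ^ 0 := by
    rw [pow_zero, Ideal.one_eq_top]; exact Submodule.mem_top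
  set r : ∀ N : ℕ, {z : R // z ∈ J ∧ z ∈ I ^ N} := fun N =>
    Nat.rec ⟨y, hyJ, hy0⟩
      (fun N p => ⟨p.1 - ∑ i, (key' N p.1 p.2.1 p.2.2).choose i * x i,
        ((key' N p.1 p.2.1 p.2.2).choose_spec).2.1,
        ((key' N p.1 p.2.1 p.2.2).choose_spec).2.2⟩) N with hrdef
  set a : ℕ → ι → R := fun N => (key' N (r N).1 (r N).2.1 (r N).2.2).choose with hadef
  have hr : ∀ N, (r (N + 1)).1 = (r N).1 - ∑ i, a N i * x i := fun N => rfl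
  have ha : ∀ N i, a N i ∈ I ^ (N - d i) :=
    fun N => ((key' N (r N).1 (r N).2.1 (r N).2.2).choose_spec).1
  set s : ι → ℕ → R := fun i M => ∑ N ∈ Finset.range M, a N i with hsdef
  have hs : ∀ M, (r M).1 = y - ∑ i, s i M * x i := by
    intro M
    induction M with
    | zero =>
      have h0 : (r 0).1 = y := rfl
      simp [hsdef, h0]
    | succ M ih =>
      rw [hr M, ih]
      have h1 : ∀ i, s i (M + 1) * x i = s i M * x i + a M i * x i := by
        intro i
        rw [hsdef]
        simp only [Finset.sum_range_succ, add_mul]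
      rw [Finset.sum_congr rfl fun i _ => h1 i, Finset.sum_add_distrib]
      ring
  -- Cauchy sequences and limits
  have hlim : ∀ i : ι, ∃ c : R, ∀ n : ℕ, s i (n + d i) ≡ c [SMOD (I ^ n • ⊤ : Submodule R R)] := by
    intro i
    apply IsPrecomplete.prec (IsAdicComplete.toIsPrecomplete (I := I) (M := R))
    intro m n hmn
    rw [SModEq.sub_mem, smul_top_eq_pow]
    have : s i (m + d i) - s i (n + d i) = -∑ N ∈ Finset.Ico (m + d i) (n + d i), a N i := by
      rw [hsdef]
      simp only
      rw [Finset.sum_Ico_eq_sub _ (by omega : m + d i ≤ n + d i)]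
      ring
    rw [this]
    refine Submodule.neg_mem _ (Ideal.sum_mem _ fun N hN => ?_)
    have hN' : m + d i ≤ N := (Finset.mem_Ico.mp hN).1
    exact Ideal.pow_le_pow_right (by omega) (ha N i)
  set c : ι → R := fun i => (hlim i).choose with hcdef
  have hc : ∀ i n, s i (n + d i) ≡ c i [SMOD (I ^ n • ⊤ : Submodule R R)] :=
    fun i => (hlim i).choose_spec
  -- the difference lies in every power of I
  have hdiff : ∀ K : ℕ, y - ∑ i, c i * x i ∈ I ^ K := by
    intro K
    set D0 : ℕ := Finset.univ.sup d with hD0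
    set M : ℕ := K + D0 with hM
    have hdec : y - ∑ i, c i * x i = (r M).1 + ∑ i, (s i M - c i) * x i := by
      rw [hs M]
      rw [Finset.sum_congr rfl fun i (_ : i ∈ Finset.univ) => sub_mul (s i M) (c i) (x i),
        Finset.sum_sub_distrib]
      ring
    rw [hdec]
    refine Submodule.add_mem _ (Ideal.pow_le_pow_right (by omega) (r M).2.2) ?_
    refine Ideal.sum_mem _ fun i _ => Ideal.mul_mem_right _ _ ?_
    have hdi : d i ≤ D0 := Finset.le_sup (Finset.mem_univ i)
    have hMi : M - d i + d i = M := by omega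
    have := hc i (M - d i)
    rw [SModEq.sub_mem, smul_top_eq_pow, hMi] at this
    exact Ideal.pow_le_pow_right (by omega) this
  have hzero : y - ∑ i, c i * x i = 0 := by
    refine IsHausdorff.haus (IsAdicComplete.toIsHausdorff (I := I) (M := R)) _ fun n => ?_
    rw [SModEq.zero, smul_top_eq_pow]
    exact hdiff n
  have hy : y = ∑ i, c i * x i := sub_eq_zero.mp hzero
  rw [hy]
  exact Ideal.sum_mem _ fun i _ =>
    Ideal.mul_mem_left _ _ (Ideal.subset_span ⟨i, rfl⟩)


/-- Stacks 05GH: a ring complete with respect to a finitely generated ideal with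
noetherian quotient is noetherian. -/
theorem isNoetherianRing_of_isAdicComplete_of_quotient {R : Type u} [CommRing R]
    (I : Ideal R) (hI : I.FG) [IsAdicComplete I R] [IsNoetherianRing (R ⧸ I)] :
    IsNoetherianRing R := by
  rw [isNoetherianRing_iff_ideal_fg]
  intro J
  obtain ⟨ι, hfin, x, d, hxJ, H⟩ := key_gens I J hI
  rw [@span_eq_of_approx R _ I _ J ι hfin x d hxJ H]
  exact Submodule.fg_span (Set.finite_range x)

/-- Let `k` be a noetherian ring and `A` a noetherian adic `k`-algebra with
finitely generated defining ideal `a` such that `A/a` is essentially of finite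
type over `k`.  If `(B, b)` is an adic ring which is essentially formally of
finite type over `(A, a)` (that is, `B/b` is essentially of finite type over
`A`), then `B` is a noetherian ring. -/
theorem isNoetherianRing_of_essFormallyOfFiniteType
    {k A B : Type*} [CommRing k] [CommRing A] [CommRing B]
    [IsNoetherianRing k] [Algebra k A] [IsNoetherianRing A]
    (a : Ideal A) (ha : a.FG) [IsAdicComplete a A]
    [Algebra.EssFiniteType k (A ⧸ a)]
    [Algebra A B] (b : Ideal B) (hb : b.FG) [IsAdicComplete b B]
    [Algebra.EssFiniteType A (B ⧸ b)] :
    IsNoetherianRing B := by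
  have h1 : IsNoetherianRing (Algebra.EssFiniteType.subalgebra A (B ⧸ b)) :=
    Algebra.FiniteType.isNoetherianRing A _
  haveI h2 : IsNoetherianRing (B ⧸ b) :=
    IsLocalization.isNoetherianRing (Algebra.EssFiniteType.submonoid A (B ⧸ b)) (B ⧸ b) h1
  exact isNoetherianRing_of_isAdicComplete_of_quotient b hb
end Aux
end

section
/- Let (A, a) be a preadic ring such that the a-adic completion Â = Λ_a(A) is noetherian. Let b ⊆ A be a finitely generated ideal and b̂ = b·Â. Then for any injective A-module I, the Â-module Γ_a(I) is b̂-flasque, i.e., the higher local cohomology modules H^k_{b̂}(Γ_a(I)) vanish for all k > 0. -/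
open CategoryTheory

section Helpers

open Limits


lemma factor_through_range {R M P Q : Type} [CommRing R] [AddCommGroup M] [AddCommGroup P]
    [AddCommGroup Q] [Module R M] [Module R P] [Module R Q]
    (u : M →ₗ[R] P) (v : M →ₗ[R] Q) (h : LinearMap.ker u ≤ LinearMap.ker v) :
    ∃ w : LinearMap.range u →ₗ[R] Q, ∀ x : M, w ⟨u x, LinearMap.mem_range_self u x⟩ = v x := by
  refine ⟨((LinearMap.ker u).liftQ v h).comp
    (u.quotKerEquivRange.symm.toLinearMap), fun x => ?_⟩
  have h0 : u.quotKerEquivRange.symm ⟨u x, LinearMap.mem_range_self u x⟩ =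
      Submodule.Quotient.mk x := by
    apply u.quotKerEquivRange.injective
    rw [LinearEquiv.apply_symm_apply]
    exact Subtype.ext (LinearMap.quotKerEquivRange_apply_mk u x).symm
  show ((LinearMap.ker u).liftQ v h) (u.quotKerEquivRange.symm ⟨u x, _⟩) = v x
  rw [h0]
  exact Submodule.liftQ_apply _ v x

lemma isZero_ext_succ_of_injective (R : Type) [CommRing R] (X : ModuleCat R)
    (M : Type) [AddCommGroup M] [Module R M] (hM : Module.Injective R M) (n : ℕ) :
    IsZero (((Ext R (ModuleCat R) (n + 1)).obj (Opposite.op X)).obj (ModuleCat.of R M)) := by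
  let P := ProjectiveResolution.of X
  refine IsZero.of_iso ?_ (P.isoExt (n+1) (ModuleCat.of R M))
  rw [← HomologicalComplex.exactAt_iff_isZero_homology]
  rw [HomologicalComplex.exactAt_iff' _ n (n+1) (n+2) (by simp) (by simp)]
  rw [ShortComplex.moduleCat_exact_iff]
  intro x hx
  let φ : P.complex.X (n+1) ⟶ ModuleCat.of R M := x
  have hφ : P.complex.d (n+2) (n+1) ≫ φ = 0 := by
    have h1 : (P.complex.linearYonedaObj R (ModuleCat.of R M)).d (n+1) (n+2) x = 0 := hx
    rw [ChainComplex.linearYonedaObj_d] at h1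
    exact h1
  have hex := P.exact_succ n
  rw [ShortComplex.moduleCat_exact_iff] at hex
  let d : P.complex.X (n+1) →ₗ[R] P.complex.X n := (P.complex.d (n+1) n).hom
  have hker : LinearMap.ker d ≤ LinearMap.ker φ.hom := by
    intro z hz
    obtain ⟨w, hw⟩ := hex z hz
    have h2 : φ (P.complex.d (n+2) (n+1) w) = 0 :=
      congrArg (fun (f : P.complex.X (n+2) ⟶ ModuleCat.of R M) => f w) hφ
    simpa [hw] using h2
  obtain ⟨w, hw⟩ := factor_through_range d φ.hom hker
  obtain ⟨h, hh⟩ := hM.out (LinearMap.range d).subtype (Submodule.injective_subtype _) w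
  refine ⟨ModuleCat.ofHom h, ?_⟩
  show (P.complex.linearYonedaObj R (ModuleCat.of R M)).d n (n+1) (ModuleCat.ofHom h) = x
  rw [ChainComplex.linearYonedaObj_d]
  refine ModuleCat.hom_ext (LinearMap.ext fun z => ?_)
  show h (d z) = φ z
  rw [← hw z]
  exact hh ⟨d z, LinearMap.mem_range_self d z⟩


lemma isZero_colimit_of_all {Jc : Type} [SmallCategory Jc] {R : Type} [CommRing R]
    (F : Jc ⥤ ModuleCat R) [HasColimit F] (h : ∀ j, IsZero (F.obj j)) : IsZero (colimit F) := by
  rw [IsZero.iff_id_eq_zero]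
  apply colimit.hom_ext
  intro j
  exact (h j).eq_of_src _ _

lemma isZero_localCohomology_obj {R : Type} [CommRing R] (J : Ideal R) (k : ℕ)
    (M : ModuleCat R)
    (h : ∀ t : ℕ, IsZero (((Ext R (ModuleCat R) k).obj
      (Opposite.op (ModuleCat.of R (R ⧸ J ^ t)))).obj M)) :
    IsZero ((localCohomology J k).obj M) := by
  have : HasColimit (localCohomology.diagram (localCohomology.idealPowersDiagram J) k) :=
    localCohomology.hasColimitDiagram _ k
  refine IsZero.of_iso ?_
    (colimitObjIsoColimitCompEvaluation
      (localCohomology.diagram (localCohomology.idealPowersDiagram J) k) M)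
  apply isZero_colimit_of_all
  intro j
  exact h (Opposite.unop (Opposite.unop j))


variable {A : Type} [CommRing A] {a : Ideal A}

lemma val_algebraMap (a : Ideal A) (r : A) (k : ℕ) :
    (algebraMap A (AdicCompletion a A) r).val k = Submodule.Quotient.mk r := rfl

lemma mem_map_pow_of_val_eq_zero (ha : a.FG) (m : ℕ) (β : AdicCompletion a A)
    (h : β.val m = 0) :
    β ∈ Ideal.map (algebraMap A (AdicCompletion a A)) (a ^ m) := by
  obtain ⟨x, rfl⟩ := AdicCompletion.mk_surjective a A β
  have hx0 : x.val m ∈ a ^ m := by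
    have h1 : Submodule.Quotient.mk (p := (a ^ m • ⊤ : Submodule A A)) (x.val m) = 0 := h
    rw [Submodule.Quotient.mk_eq_zero] at h1
    simpa using h1
  obtain ⟨t, g, hg⟩ := Submodule.fg_iff_exists_fin_generating_family.mp (Submodule.FG.pow ha m)
  have hgmem : ∀ i, g i ∈ a ^ m := by
    intro i
    rw [← hg]
    exact Submodule.subset_span (Set.mem_range_self i)
  have hdiff : ∀ n : ℕ, x.val (m + n + 1) - x.val (m + n) ∈
      (a ^ n) • (Submodule.span A (Set.range g)) := by
    intro n
    rw [hg, Ideal.smul_eq_mul, ← pow_add]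
    have h2 := x.property (Nat.le_succ (m + n))
    rw [SModEq.sub_mem] at h2
    have h3 : x.val (m + n) - x.val (m + n + 1) ∈ a ^ (m + n) := by simpa using h2
    simpa [add_comm n m] using neg_mem h3
  have hch : ∀ n : ℕ, ∃ d : Fin t →₀ A, (∀ i, d i ∈ a ^ n) ∧
      (d.sum fun i c => c • g i) = x.val (m + n + 1) - x.val (m + n) := by
    intro n
    obtain ⟨d, hd1, hd2⟩ := (Submodule.mem_ideal_smul_span_iff_exists_sum _ _ _).mp (hdiff n)
    exact ⟨d, hd1, hd2⟩
  choose d hd1 hd2 using hch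
  obtain ⟨c₀, hc₀⟩ := (Submodule.mem_span_range_iff_exists_fun A).mp (hg ▸ hx0)
  set C : ℕ → Fin t → A := fun n i => c₀ i + ∑ j ∈ Finset.range n, d j i with hC
  have hsum : ∀ n : ℕ, ∑ i, C n i * g i = x.val (m + n) := by
    intro n
    induction n with
    | zero => simpa [hC, smul_eq_mul] using hc₀
    | succ n ih =>
      have hCs : ∀ i, C (n+1) i = C n i + d n i := by
        intro i; simp [hC, Finset.sum_range_succ, add_assoc]
      have hdsum : ∑ i, d n i * g i = x.val (m + n + 1) - x.val (m + n) := by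
        rw [← hd2 n, Finsupp.sum_fintype]
        · simp [smul_eq_mul]
        · intro i; simp
      have : ∑ i, C (n+1) i * g i = (∑ i, C n i * g i) + ∑ i, d n i * g i := by
        simp [hCs, add_mul, Finset.sum_add_distrib]
      rw [this, ih, hdsum, show m + (n+1) = m + n + 1 from rfl]
      ring
  have hcauchy : ∀ i, ∀ n : ℕ, C n i ≡ C (n+1) i [SMOD (a ^ n • ⊤ : Submodule A A)] := by
    intro i n
    rw [SModEq.sub_mem]
    have hd : C n i - C (n+1) i = -(d n i) := by
      simp only [hC, Finset.sum_range_succ]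
      ring
    rw [hd]
    exact neg_mem (by simpa using hd1 n i)
  set γ : Fin t → AdicCompletion a A := fun i =>
    AdicCompletion.mk a A (AdicCompletion.AdicCauchySequence.mk a A (fun n => C n i) (hcauchy i))
    with hγ
  have key : AdicCompletion.mk a A x = ∑ i, algebraMap A (AdicCompletion a A) (g i) * γ i := by
    ext k
    rw [AdicCompletion.val_sum_apply]
    have hterm : ∀ i, (algebraMap A (AdicCompletion a A) (g i) * γ i).val k =
        Submodule.Quotient.mk (g i * C k i) := by
      intro i
      rw [AdicCompletion.val_mul, val_algebraMap]
      rfl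
    simp only [hterm]
    have hmk : ∀ i : Fin t, Submodule.Quotient.mk (p := (a ^ k • ⊤ : Submodule A A)) (g i * C k i)
        = Submodule.mkQ _ (g i * C k i) := fun i => rfl
    simp only [hmk]
    rw [← map_sum]
    have hxsum : ∑ i, g i * C k i = x.val (m + k) := by
      rw [← hsum k]
      exact Finset.sum_congr rfl fun i _ => mul_comm _ _
    rw [hxsum]
    have h5 := x.property (Nat.le_add_left k m)
    rw [SModEq.def] at h5
    show Submodule.Quotient.mk (x.val k) = Submodule.Quotient.mk (x.val (m + k))
    exact h5
  rw [key]
  refine Submodule.sum_mem _ fun i _ => ?_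
  exact Ideal.mul_mem_right _ _ (Ideal.mem_map_of_mem _ (hgmem i))

lemma exists_approx (ha : a.FG) (m : ℕ) (β : AdicCompletion a A) :
    ∃ r : A, β - algebraMap A (AdicCompletion a A) r ∈
      Ideal.map (algebraMap A (AdicCompletion a A)) (a ^ m) := by
  obtain ⟨x, rfl⟩ := AdicCompletion.mk_surjective a A β
  refine ⟨x.val m, mem_map_pow_of_val_eq_zero ha m _ ?_⟩
  rw [AdicCompletion.val_sub_apply, val_algebraMap]
  show Submodule.Quotient.mk (x.val m) - Submodule.Quotient.mk (x.val m) = 0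
  simp


set_option maxHeartbeats 1000000 in
theorem torsion_injective
    {A : Type} [CommRing A] (a : Ideal A) (ha : a.FG)
    [IsNoetherianRing (AdicCompletion a A)]
    (I : Type) [AddCommGroup I] [Module A I] (hI : Module.Injective A I)
    (N : Type) [AddCommGroup N] [Module A N]
    [Module (AdicCompletion a A) N] [IsScalarTower A (AdicCompletion a A) N]
    (e : N ≃ₗ[A] (⨆ n : ℕ, Submodule.torsionBySet A I ((a ^ n : Ideal A) : Set A) :
        Submodule A I)) :
    Module.Injective (AdicCompletion a A) N := by
  set B := AdicCompletion a A
  set α := algebraMap A B with hα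
  set T : ℕ → Submodule A I := fun n => Submodule.torsionBySet A I ((a ^ n : Ideal A) : Set A)
    with hT
  set Γ : Submodule A I := ⨆ n, T n with hΓ
  have hTmono : Monotone T := by
    intro n n' hnn'
    exact Submodule.torsionBySet_le_torsionBySet_of_subset
      (Ideal.pow_le_pow_right hnn')
  -- (1) A-torsion implies completed-ideal-torsion
  have htor : ∀ (m : ℕ) (x : N), (∀ r ∈ a ^ m, r • x = 0) →
      ∀ β ∈ Ideal.map α (a ^ m), β • x = 0 := by
    intro m x hx β hβ
    refine Submodule.span_induction ?_ ?_ ?_ ?_ hβ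
    · rintro _ ⟨r, hr, rfl⟩
      rw [algebraMap_smul]
      exact hx r hr
    · exact zero_smul B x
    · intro β₁ β₂ _ _ h1 h2
      rw [add_smul, h1, h2, add_zero]
    · intro c β₁ _ h1
      rw [smul_eq_mul, mul_smul, h1, smul_zero]
  -- (4)/(5) every element of N is torsion
  have hPmem : ∀ (m : ℕ) (x : N), (∀ r ∈ a ^ m, r • x = 0) ↔ ((e x : I) ∈ T m) := by
    intro m x
    rw [hT]
    rw [Submodule.mem_torsionBySet_iff]
    constructor
    · rintro h ⟨r, hr⟩
      have : e (r • x) = r • e x := map_smul e r x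
      rw [h r hr] at this
      have h0 : r • (e x : I) = ((r • e x : Γ) : I) := rfl
      rw [h0, ← this]
      simp
    · intro h r hr
      apply e.injective
      rw [map_smul e r x, map_zero]
      ext
      have := h ⟨r, hr⟩
      simpa using this
  have hunion : ∀ x : N, ∃ m, ∀ r ∈ a ^ m, r • x = 0 := by
    intro x
    have hmem : (e x : I) ∈ ⨆ n, T n := (e x).2
    rw [Submodule.mem_iSup_of_directed T hTmono.directed_le] at hmem
    obtain ⟨m, hm⟩ := hmem
    exact ⟨m, (hPmem m x).mpr hm⟩
  -- the filtration of N by completed torsion submodules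
  set Nn : ℕ → Submodule B N := fun m =>
    Submodule.torsionBySet B N ((Ideal.map α (a ^ m) : Ideal B) : Set B) with hNn
  have hNmem : ∀ (m : ℕ) (x : N), x ∈ Nn m ↔ ∀ r ∈ a ^ m, r • x = 0 := by
    intro m x
    rw [Submodule.mem_torsionBySet_iff]
    constructor
    · intro h r hr
      have h2 := h ⟨α r, Ideal.mem_map_of_mem α hr⟩
      rwa [algebraMap_smul] at h2
    · rintro h ⟨β, hβ⟩
      exact htor m x h β hβ
  have hNmono : Monotone Nn := by
    intro m m' hmm'
    exact Submodule.torsionBySet_le_torsionBySet_of_subset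
      (Ideal.map_mono (Ideal.pow_le_pow_right hmm'))
  apply Module.Baer.injective
  intro c f
  choose ν hν using hunion
  obtain ⟨s, hs⟩ := IsNoetherian.noetherian c
  set n₀ : ℕ := s.attach.sup fun y => ν (f ⟨y.1, hs ▸ Submodule.subset_span y.2⟩) with hn₀
  have hfc : ∀ (x : B) (hx : x ∈ c), f ⟨x, hx⟩ ∈ Nn n₀ := by
    have key : ∀ x ∈ (Submodule.span B (↑s : Set B) : Ideal B),
        ∀ hx : x ∈ c, f ⟨x, hx⟩ ∈ Nn n₀ := by
      intro x hxs
      induction hxs using Submodule.span_induction with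
      | mem y hy =>
        intro hx
        have h1 : f ⟨y, hx⟩ ∈ Nn (ν (f ⟨y, hx⟩)) := (hNmem _ _).mpr (hν _)
        refine hNmono ?_ h1
        have h2 := Finset.le_sup (f := fun y : {x // x ∈ s} =>
          ν (f ⟨y.1, hs ▸ Submodule.subset_span y.2⟩)) (Finset.mem_attach s ⟨y, hy⟩)
        exact h2
      | zero =>
        intro hx
        have : (⟨(0 : B), hx⟩ : ↥c) = 0 := rfl
        rw [this, map_zero]
        exact Submodule.zero_mem _
      | add y z hy hz ihy ihz =>
        intro hx
        have hyc : y ∈ c := hs ▸ hy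
        have hzc : z ∈ c := hs ▸ hz
        have : (⟨y + z, hx⟩ : ↥c) = ⟨y, hyc⟩ + ⟨z, hzc⟩ := rfl
        rw [this, map_add]
        exact Submodule.add_mem _ (ihy hyc) (ihz hzc)
      | smul b y hy ihy =>
        intro hx
        have hyc : y ∈ c := hs ▸ hy
        have : (⟨b • y, hx⟩ : ↥c) = b • ⟨y, hyc⟩ := rfl
        rw [this, map_smul]
        exact Submodule.smul_mem _ b (ihy hyc)
    intro x hx
    exact key x (hs ▸ hx) hx
  have hNtor : ∀ (m : ℕ) (y : N), y ∈ Nn m → ∀ β ∈ Ideal.map α (a ^ m), β • y = 0 :=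
    fun m y hy => htor m y ((hNmem m y).mp hy)
  -- Artin-Rees
  obtain ⟨k, hk⟩ := Ideal.exists_pow_inf_eq_pow_smul (Ideal.map α a) c
  set m := n₀ + k with hmdef
  set J : Ideal B := Ideal.map α (a ^ m) with hJ
  have htop : ∀ n : ℕ, (Ideal.map α a ^ n • ⊤ : Ideal B) = Ideal.map α a ^ n := by
    intro n; ext z; simp
  have hAR : J ⊓ c ≤ (Ideal.map α a ^ n₀) • ((Ideal.map α a ^ k • ⊤ : Ideal B) ⊓ c) := by
    have h1 := hk m (by omega)
    have h2 : m - k = n₀ := by omega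
    rw [h2] at h1
    intro z hz
    have : z ∈ (Ideal.map α a ^ m • ⊤ : Ideal B) ⊓ c := by
      refine ⟨?_, hz.2⟩
      rw [htop m, ← Ideal.map_pow]
      exact hz.1
    rw [h1] at this
    exact this
  have hkill : ∀ (x : B) (hx : x ∈ c), x ∈ J → f ⟨x, hx⟩ = 0 := by
    have hle : (Ideal.map α a ^ n₀) • ((Ideal.map α a ^ k • ⊤ : Ideal B) ⊓ c) ≤ c := by
      refine le_trans (Submodule.smul_le_right) inf_le_right
    have key : ∀ z (hz : z ∈ (Ideal.map α a ^ n₀) • ((Ideal.map α a ^ k • ⊤ : Ideal B) ⊓ c)),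
        f ⟨z, hle hz⟩ = 0 := by
      intro z hz
      induction hz using Submodule.smul_induction_on' with
      | smul r hr w hw =>
        have hwc : w ∈ c := hw.2
        have heq : (⟨r • w, hle (Submodule.smul_mem_smul hr hw)⟩ : ↥c) = r • ⟨w, hwc⟩ := rfl
        rw [heq, map_smul]
        have hr' : r ∈ Ideal.map α (a ^ n₀) := by rwa [Ideal.map_pow]
        exact hNtor n₀ _ (hfc w hwc) r hr'
      | add x hx y hy ihx ihy =>
        have heq : (⟨x + y, hle (Submodule.add_mem _ hx hy)⟩ : ↥c) =
            ⟨x, hle hx⟩ + ⟨y, hle hy⟩ := rfl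
        rw [heq, map_add, ihx, ihy, add_zero]
    intro x hx hxJ
    exact key x (hAR ⟨hxJ, hx⟩)
  -- extend f to c ⊔ J, killing J
  set u : ↥c × ↥J →ₗ[B] B := LinearMap.coprod c.subtype J.subtype with hu
  set v : ↥c × ↥J →ₗ[B] N := f.comp (LinearMap.fst B ↥c ↥J) with hv
  have hker : LinearMap.ker u ≤ LinearMap.ker v := by
    rintro ⟨x, y⟩ hxy
    have h0 : (x : B) + (y : B) = 0 := hxy
    have hxJ : (x : B) ∈ J := by
      have hneg : (x : B) = -(y : B) := eq_neg_of_add_eq_zero_left h0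
      rw [hneg]
      exact neg_mem y.2
    show f x = 0
    exact hkill x x.2 hxJ
  obtain ⟨w, hw⟩ := factor_through_range u v hker
  have hcc' : ∀ x ∈ c, x ∈ LinearMap.range u := by
    intro x hx
    exact ⟨(⟨x, hx⟩, 0), by simp [hu]⟩
  have hJc' : ∀ x ∈ J, x ∈ LinearMap.range u := by
    intro x hx
    exact ⟨(0, ⟨x, hx⟩), by simp [hu]⟩
  have hgf : ∀ (x : B) (hx : x ∈ c) (hx' : x ∈ LinearMap.range u), w ⟨x, hx'⟩ = f ⟨x, hx⟩ := by
    intro x hx hx'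
    have h1 := hw (⟨x, hx⟩, 0)
    have h2 : (⟨u (⟨x, hx⟩, 0), LinearMap.mem_range_self u _⟩ : ↥(LinearMap.range u)) = ⟨x, hx'⟩ := by
      apply Subtype.ext
      show (x : B) + ((0 : ↥J) : B) = x
      simp
    rw [h2] at h1
    exact h1
  have hgJ : ∀ (x : B) (hx : x ∈ J) (hx' : x ∈ LinearMap.range u), w ⟨x, hx'⟩ = 0 := by
    intro x hx hx'
    have h1 := hw (0, ⟨x, hx⟩)
    have h2 : (⟨u (0, ⟨x, hx⟩), LinearMap.mem_range_self u _⟩ : ↥(LinearMap.range u)) = ⟨x, hx'⟩ := by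
      apply Subtype.ext
      show ((0 : ↥c) : B) + x = x
      simp
    rw [h2] at h1
    rw [h1]
    show f 0 = 0
    exact map_zero f
  -- extend the A-linear version over all of B using injectivity of I
  set γ : ↥(LinearMap.range u) →ₗ[A] I :=
    Γ.subtype.comp ((e : N →ₗ[A] ↥Γ).comp (w.restrictScalars A)) with hγdef
  obtain ⟨δ, hδ⟩ := hI.out (((LinearMap.range u).subtype).restrictScalars A)
    (Submodule.injective_subtype (LinearMap.range u)) γ
  have hδc' : ∀ (x : B) (hx : x ∈ LinearMap.range u), δ x = (e (w ⟨x, hx⟩) : I) := by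
    intro x hx
    exact hδ ⟨x, hx⟩
  have F1 : ∀ x ∈ J, δ x = 0 := by
    intro x hx
    rw [hδc' x (hJc' x hx), hgJ x hx (hJc' x hx), map_zero]
    rfl
  have δmem : ∀ s : B, δ s ∈ T m := by
    intro s
    rw [Submodule.mem_torsionBySet_iff]
    rintro ⟨r, hr⟩
    show r • δ s = 0
    rw [← map_smul δ r s, Algebra.smul_def r s]
    exact F1 _ (Ideal.mul_mem_right s _ (Ideal.mem_map_of_mem α hr))
  set Fs : B → N := fun s => e.symm ⟨δ s, le_iSup T m (δmem s)⟩ with hFs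
  have heF : ∀ s, (e (Fs s) : I) = δ s := by
    intro s
    show ((e (e.symm ⟨δ s, le_iSup T m (δmem s)⟩)) : I) = δ s
    rw [e.apply_symm_apply]
  have hFsm : ∀ s, ∀ r ∈ a ^ m, r • Fs s = 0 := by
    intro s r hr
    apply e.injective
    rw [map_smul, map_zero]
    apply Subtype.ext
    show r • ((e (Fs s)) : I) = ((0 : ↥Γ) : I)
    rw [heF]
    have h1 := (Submodule.mem_torsionBySet_iff _ _).mp (δmem s) ⟨r, hr⟩
    simpa using h1
  have hFstor : ∀ s β, β ∈ J → β • Fs s = 0 := fun s β hβ =>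
    htor m (Fs s) (hFsm s) β hβ
  have hstar : ∀ s x : B, (e (x • Fs s) : I) = δ (x * s) := by
    intro s x
    obtain ⟨r, hr⟩ := exists_approx ha m x
    set z := x - α r with hz
    have hxz : x = α r + z := by rw [hz]; ring
    have h1 : x • Fs s = r • Fs s := by
      rw [hxz, add_smul, hFstor s z hr, add_zero, algebraMap_smul]
    have h2 : (e (r • Fs s) : I) = r • (e (Fs s) : I) := by
      rw [map_smul]; rfl
    have h3 : δ (x * s) = δ (α r * s) + δ (z * s) := by
      rw [hxz]; rw [add_mul, map_add]
    have h4 : δ (z * s) = 0 := F1 _ (Ideal.mul_mem_right s _ hr)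
    rw [h1, h2, heF, h3, h4, add_zero, ← Algebra.smul_def r s, map_smul]
  have hFadd : ∀ s t, Fs (s + t) = Fs s + Fs t := by
    intro s t
    apply e.injective
    apply Subtype.ext
    rw [map_add]
    show (e (Fs (s + t)) : I) = ((e (Fs s) + e (Fs t) : ↥Γ) : I)
    have : ((e (Fs s) + e (Fs t) : ↥Γ) : I) = (e (Fs s) : I) + (e (Fs t) : I) := rfl
    rw [this, heF, heF, heF, map_add]
  have hFsmul : ∀ (b t : B), Fs (b * t) = b • Fs t := by
    intro b t
    apply e.injective
    apply Subtype.ext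
    show (e (Fs (b * t)) : I) = (e (b • Fs t) : I)
    rw [heF, hstar t b]
  set F : B →ₗ[B] N :=
    { toFun := Fs
      map_add' := hFadd
      map_smul' := by
        intro b t
        simp only [smul_eq_mul, RingHom.id_apply]
        exact hFsmul b t } with hF
  refine ⟨F, fun x hx => ?_⟩
  show Fs x = f ⟨x, hx⟩
  apply e.injective
  apply Subtype.ext
  show (e (Fs x) : I) = (e (f ⟨x, hx⟩) : I)
  rw [heF, hδc' x (hcc' x hx), hgf x hx (hcc' x hx)]


/-- Let `(A, a)` be a preadic ring whose `a`-adic completion `Â` is noetherian,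
let `b ⊆ A` be a finitely generated ideal and `b̂ = b·Â`.  Then for any
injective `A`-module `I`, the `Â`-module `Γ_a(I)` (the `a`-torsion submodule of
`I`, with its natural `Â`-module structure) is `b̂`-flasque: the local
cohomology modules `H^k_{b̂}(Γ_a(I))` vanish for all `k > 0`. -/
theorem torsion_of_injective_is_flasque
    {A : Type} [CommRing A] (a : Ideal A) (ha : a.FG)
    [IsNoetherianRing (AdicCompletion a A)]
    (b : Ideal A) (hb : b.FG)
    (I : Type) [AddCommGroup I] [Module A I] (hI : Module.Injective A I)
    -- `N` is the `a`-torsion submodule `Γ_a(I) = ⋃ₙ (aⁿ)-torsion`,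
    -- endowed with its natural `Â`-module structure extending the `A`-action.
    (N : Type) [AddCommGroup N] [Module A N]
    [Module (AdicCompletion a A) N] [IsScalarTower A (AdicCompletion a A) N]
    (e : N ≃ₗ[A] (⨆ n : ℕ, Submodule.torsionBySet A I ((a ^ n : Ideal A) : Set A) :
        Submodule A I)) :
    ∀ k : ℕ, 0 < k →
      Limits.IsZero
        ((localCohomology (b.map (algebraMap A (AdicCompletion a A))) k).obj
          (ModuleCat.of (AdicCompletion a A) N)) := by
  intro k hk
  obtain ⟨j, rfl⟩ : ∃ j, k = j + 1 := ⟨k - 1, by omega⟩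
  have hinj : Module.Injective (AdicCompletion a A) N := torsion_injective a ha I hI N e
  apply isZero_localCohomology_obj
  intro t
  exact isZero_ext_succ_of_injective _ _ _ hinj j

end Helpers
end

section
/- Let (A, a) be a preadic ring such that Λ_a(A) is noetherian. If P is a projective A-module, then the a-adic completion Λ_a(P) is a flat Λ_a(A)-module. -/
open LinearMap Submodule AdicCompletion

namespace AdicFlat

theorem exists_coeff_of_mem_smul_span {R M : Type*} [CommRing R] [AddCommGroup M] [Module R M]
    (I : Ideal R) {s : ℕ} (g : Fin s → M) {x : M}
    (hx : x ∈ I • (Submodule.span R (Set.range g))) :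
    ∃ c : Fin s → R, (∀ t, c t ∈ I) ∧ x = ∑ t, c t • g t := by
  refine Submodule.smul_induction_on hx ?_ ?_
  · intro r hr m hm
    obtain ⟨d, rfl⟩ := (mem_span_range_iff_exists_fun R).mp hm
    exact ⟨fun t ↦ r * d t, fun t ↦ Ideal.mul_mem_right _ _ hr, by
      simp [Finset.smul_sum, mul_smul]⟩
  · rintro x y ⟨c, hc, rfl⟩ ⟨c', hc', rfl⟩
    exact ⟨c + c', fun t ↦ I.add_mem (hc t) (hc' t), by
      simp [add_smul, Finset.sum_add_distrib]⟩

variable {A : Type*} [CommRing A] (a : Ideal A)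

theorem smul_top_ideal (I : Ideal A) : (I • ⊤ : Ideal A) = I := by ext x; simp


theorem mem_pow_map_of_val_eq_zero (ha : a.FG) (n : ℕ) {x : AdicCompletion a A}
    (hx : x.val n = 0) : x ∈ (a.map (algebraMap A (AdicCompletion a A))) ^ n := by
  obtain ⟨f, rfl⟩ := AdicCompletion.mk_surjective a A x
  have hfn : f.val n ∈ (a ^ n : Ideal A) := by
    have h0 : Submodule.mkQ (a ^ n • ⊤ : Submodule A A) (f.val n) = 0 := hx
    rw [Submodule.mkQ_apply, Submodule.Quotient.mk_eq_zero, smul_top_ideal] at h0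
    exact h0
  obtain ⟨q, e, he⟩ := Submodule.fg_iff_exists_fin_generating_family.mp (Submodule.FG.pow ha n)
  set g : ℕ → A := fun k ↦ f.val (max k n) with hg
  have hgmem : ∀ k, g k ∈ (a ^ n : Ideal A) := by
    intro k
    have h1 : f.val n - f.val (max k n) ∈ (a ^ n • ⊤ : Submodule A A) :=
      (SModEq.sub_mem).mp (f.property (le_max_right k n))
    rw [smul_top_ideal] at h1
    simpa using sub_mem hfn h1
  have hdiff : ∀ k, g (k + 1) - g k ∈ (a ^ (k - n)) • (Submodule.span A (Set.range e)) := by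
    intro k
    rcases le_or_gt n k with h' | h'
    · have hk1 : max (k+1) n = k + 1 := max_eq_left (h'.trans (Nat.le_succ k))
      have hk2 : max k n = k := max_eq_left h'
      have h2 : f.val k - f.val (k + 1) ∈ (a ^ k • ⊤ : Submodule A A) :=
        (SModEq.sub_mem).mp (f.property (Nat.le_succ k))
      rw [smul_top_ideal] at h2
      have h3 : g (k + 1) - g k ∈ (a ^ k : Ideal A) := by
        rw [hg]; simp only [hk1, hk2]
        simpa using neg_mem h2
      rw [he, smul_eq_mul, ← pow_add, Nat.sub_add_cancel h']
      exact h3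
    · have h0 : g (k + 1) = g k := by
        rw [hg]; simp only [max_eq_right (Nat.succ_le_of_lt h'), max_eq_right (Nat.le_of_lt_succ (Nat.lt_succ_of_lt h'))]
      rw [h0, sub_self]
      exact zero_mem _
  choose d hd1 hd2 using fun k ↦ exists_coeff_of_mem_smul_span (a ^ (k - n)) e (hdiff k)
  obtain ⟨c₀, hc₀⟩ := (mem_span_range_iff_exists_fun A).mp (he ▸ hgmem 0)
  set C : ℕ → Fin q → A := fun k t ↦ c₀ t + ∑ j ∈ Finset.range k, d j t with hC
  have hCg : ∀ k, ∑ t, C k t • e t = g k := by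
    intro k
    induction k with
    | zero => simpa [hC] using hc₀
    | succ k ih =>
        have : ∀ t, C (k+1) t = C k t + d k t := by
          intro t; rw [hC]; simp [Finset.sum_range_succ]; ring
        calc ∑ t, C (k+1) t • e t = ∑ t, (C k t • e t + d k t • e t) := by
              simp_rw [this, add_smul]
          _ = (∑ t, C k t • e t) + ∑ t, d k t • e t := Finset.sum_add_distrib
          _ = g k + (g (k+1) - g k) := by rw [ih, ← hd2 k]
          _ = g (k+1) := by ring
  -- the cauchy coefficient sequences
  have hcau : ∀ t, ∀ k, C (k + n) t ≡ C (k + 1 + n) t [SMOD (a ^ k • ⊤ : Submodule A A)] := by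
    intro t k
    rw [SModEq.sub_mem, smul_top_ideal]
    have h4 : C (k + n) t - C (k + 1 + n) t = -(d (k + n) t) := by
      rw [hC]
      have : k + 1 + n = (k + n) + 1 := by ring
      rw [this]
      simp [Finset.sum_range_succ]
    rw [h4]
    refine neg_mem ?_
    have := hd1 (k + n) t
    simpa using this
  set η : Fin q → AdicCompletion a A := fun t ↦
    AdicCompletion.mk a A (AdicCauchySequence.mk (I := a) (M := A) (fun k ↦ C (k + n) t) (hcau t)) with hη
  have key : AdicCompletion.mk a A f = ∑ t, η t * algebraMap A (AdicCompletion a A) (e t) := by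
    ext k
    rw [AdicCompletion.val_sum_apply]
    have hval : ∀ t, (η t * algebraMap A (AdicCompletion a A) (e t)).val k =
        Submodule.mkQ (a ^ k • ⊤ : Submodule A A) (C (k + n) t * e t) := by
      intro t
      rw [AdicCompletion.val_mul]
      show _ * Submodule.mkQ (a ^ k • ⊤ : Submodule A A) (e t) = _
      rw [hη]
      show Submodule.mkQ _ (C (k + n) t) * Submodule.mkQ _ (e t) = _
      simp only [Submodule.mkQ_apply, Ideal.Quotient.mk_eq_mk]
      rw [← map_mul]
    simp_rw [hval]
    rw [← map_sum]
    have : ∑ t, C (k + n) t * e t = g (k + n) := by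
      simpa [smul_eq_mul] using hCg (k + n)
    rw [this]
    show Submodule.mkQ _ (f.val k) = _
    have : g (k + n) = f.val (max (k + n) n) := rfl
    rw [this, Submodule.mkQ_apply, Submodule.mkQ_apply,
      AdicCauchySequence.mk_eq_mk (le_max_of_le_left (Nat.le_add_right k n)) f]
  rw [key, ← Ideal.map_pow]
  refine sum_mem fun t _ ↦ Ideal.mul_mem_left _ _ (Ideal.mem_map_of_mem _ ?_)
  exact he ▸ Submodule.subset_span ⟨t, rfl⟩


theorem val_eq_zero_of_mem {n : ℕ} {x : AdicCompletion a A}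
    (hx : x ∈ (a.map (algebraMap A (AdicCompletion a A))) ^ n) : x.val n = 0 := by
  rw [← Ideal.map_pow] at hx
  have hx' : x ∈ Ideal.span ((algebraMap A (AdicCompletion a A)) '' ((a ^ n : Ideal A) : Set A)) := hx
  refine Submodule.span_induction ?_ ?_ ?_ ?_ hx'
  · rintro _ ⟨y, hy, rfl⟩
    show (algebraMap A (AdicCompletion a A) y).val n = 0
    have hy' : y ∈ (a ^ n • ⊤ : Submodule A A) := by
      rw [smul_top_ideal]; exact hy
    show Submodule.mkQ _ y = 0
    rw [Submodule.mkQ_apply, Submodule.Quotient.mk_eq_zero]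
    exact hy'
  · rfl
  · intro x y _ _ hx hy
    rw [AdicCompletion.val_add_apply, hx, hy, add_zero]
  · intro r x _ hx
    show (r * x).val n = 0
    rw [AdicCompletion.val_mul, hx, mul_zero]

theorem apply_mem_of_mem_smul_top {R M : Type*} [CommRing R] [AddCommGroup M] [Module R M]
    (I : Ideal R) (f : M →ₗ[R] R) {x : M} (hx : x ∈ (I • ⊤ : Submodule R M)) : f x ∈ I := by
  have h1 : f x ∈ (I • ⊤ : Submodule R M).map f := Submodule.mem_map_of_mem hx
  rw [Submodule.map_smul''] at h1
  have h2 : I • (⊤ : Submodule R M).map f ≤ I • (⊤ : Submodule R R) :=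
    Submodule.smul_mono le_rfl le_top
  have h3 := h2 h1
  rwa [show (I • ⊤ : Submodule R R) = I by ext x; simp] at h3

theorem pi_mem_smul_top {R : Type*} [CommRing R] {σ : Type*} [Fintype σ]
    (I : Ideal R) (v : σ → R) (h : ∀ p, v p ∈ I) : v ∈ (I • ⊤ : Submodule R (σ → R)) := by
  classical
  have hv : ∑ p, v p • (Pi.single p (1 : R) : σ → R) = v := by
    have h1 : ∀ p ∈ Finset.univ, v p • (Pi.single p (1 : R) : σ → R) = Pi.single p (v p) := by
      intro p _
      ext q
      by_cases hq : q = p <;> simp [Pi.single_apply, hq]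
    rw [Finset.sum_congr rfl h1, Finset.univ_sum_single]
  rw [← hv]
  exact Submodule.sum_mem _ fun p _ ↦ Submodule.smul_mem_smul (h p) trivial

theorem finsupp_mem_smul_top {ι : Type*} (I : Ideal A) (g : ι →₀ A) (h : ∀ i, g i ∈ I) :
    g ∈ (I • ⊤ : Submodule A (ι →₀ A)) := by
  classical
  have hg : ∑ i ∈ g.support, (g i) • Finsupp.single i (1 : A) = g := by
    have h1 : ∀ i ∈ g.support, (g i) • Finsupp.single i (1 : A) = Finsupp.single i (g i) := by
      intro i _
      rw [Finsupp.smul_single, smul_eq_mul, mul_one]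
    rw [Finset.sum_congr rfl h1]
    exact Finsupp.sum_single g
  rw [← hg]
  exact Submodule.sum_mem _ fun i _ ↦ Submodule.smul_mem_smul (h i) trivial

variable (ι : Type*)

/-- The submodule of null families. -/
def nullSubmodule : Submodule (AdicCompletion a A) (ι → AdicCompletion a A) where
  carrier := {x | ∀ n : ℕ, {i | (x i).val n ≠ 0}.Finite}
  add_mem' := by
    intro x y hx hy n
    refine ((hx n).union (hy n)).subset fun i hi ↦ ?_
    by_contra hc
    simp only [Set.mem_union, Set.mem_setOf_eq, not_or, not_not] at hc
    apply hi
    show ((x + y) i).val n = 0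
    have : (x + y) i = x i + y i := rfl
    rw [this, AdicCompletion.val_add_apply, hc.1, hc.2, add_zero]
  zero_mem' := by
    intro n
    convert Set.finite_empty
    ext i
    simp only [Set.mem_setOf_eq, Set.mem_empty_iff_false, iff_false, not_not]
    rfl
  smul_mem' := by
    intro r x hx n
    refine (hx n).subset fun i hi ↦ ?_
    by_contra hc
    simp only [Set.mem_setOf_eq, not_not] at hc
    apply hi
    show ((r • x) i).val n = 0
    have : (r • x) i = r * x i := rfl
    rw [this, AdicCompletion.val_mul, hc, mul_zero]

theorem mem_nullSubmodule_iff {x : ι → AdicCompletion a A} :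
    x ∈ nullSubmodule a ι ↔ ∀ n : ℕ, {i | (x i).val n ≠ 0}.Finite := Iff.rfl


set_option maxHeartbeats 1000000 in
set_option synthInstance.maxHeartbeats 200000 in
theorem flat_nullSubmodule [IsNoetherianRing (AdicCompletion a A)] (ha : a.FG) :
    Module.Flat (AdicCompletion a A) (nullSubmodule a ι) := by
  classical
  set B := AdicCompletion a A with hB
  set b : Ideal B := a.map (algebraMap A B) with hb
  rw [Module.Flat.iff_rTensor_injective']
  intro J
  rw [injective_iff_map_eq_zero]
  intro z hz
  obtain ⟨S, rfl⟩ := TensorProduct.exists_finset z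
  set m := S.card with hm
  set ε : Fin m ≃ { p // p ∈ S } := S.equivFin.symm with hε
  have hzS : ∑ p ∈ S, p.1 ⊗ₜ[B] p.2 = ∑ u : Fin m, ((ε u).1.1 ⊗ₜ[B] (ε u).1.2) := by
    rw [Equiv.sum_comp ε (fun p : { p // p ∈ S } ↦ (p.1.1 ⊗ₜ[B] p.1.2))]
    exact (Finset.sum_coe_sort S (fun q ↦ q.1 ⊗ₜ[B] q.2)).symm
  -- the relation
  have hrel : ∑ u : Fin m, ((ε u).1.1 : B) • ((ε u).1.2 : nullSubmodule a ι) = 0 := by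
    have h1 : ((TensorProduct.lid B (nullSubmodule a ι)).toLinearMap.comp
        (LinearMap.rTensor (nullSubmodule a ι) J.subtype))
        (∑ p ∈ S, p.1 ⊗ₜ[B] p.2) = 0 := by
      rw [LinearMap.comp_apply, hz, _root_.map_zero]
    rw [hzS, map_sum] at h1
    simpa only [LinearMap.comp_apply, LinearMap.rTensor_tmul, Submodule.coe_subtype,
      LinearEquiv.coe_coe, TensorProduct.lid_tmul] using h1
  have hrel' : ∀ i, ∑ u : Fin m, (((ε u).1.1 : B) * (((ε u).1.2 : ι → B) i)) = 0 := by
    intro i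
    have h2 : ((∑ u : Fin m, ((ε u).1.1 : B) • ((ε u).1.2 : nullSubmodule a ι) :
        nullSubmodule a ι) : ι → B) i = 0 := by rw [hrel]; rfl
    rw [Submodule.coe_sum, Finset.sum_apply] at h2
    rw [← h2]
    exact Finset.sum_congr rfl fun u _ ↦ rfl
  -- the kernel of the coefficient map
  set φ : (Fin m → B) →ₗ[B] B :=
    { toFun := fun v ↦ ∑ u, ((ε u).1.1 : B) * v u
      map_add' := by intro v w; simp [mul_add, Finset.sum_add_distrib]
      map_smul' := by
        intro r v
        simp only [Pi.smul_apply, smul_eq_mul, RingHom.id_apply, Finset.mul_sum]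
        exact Finset.sum_congr rfl fun u _ ↦ by ring } with hφ
  set K : Submodule B (Fin m → B) := LinearMap.ker φ with hK
  obtain ⟨s, gK, hgK⟩ := Submodule.fg_iff_exists_fin_generating_family.mp (IsNoetherian.noetherian K)
  have hgKmem : ∀ t, gK t ∈ K := fun t ↦ hgK ▸ Submodule.subset_span ⟨t, rfl⟩
  obtain ⟨k, hAR⟩ := Ideal.exists_pow_inf_eq_pow_smul (R := B) (M := Fin m → B) b K
  -- the matrix of coordinates
  set X : ι → (Fin m → B) := fun i u ↦ ((ε u).1.2 : ι → B) i with hX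
  have hXK : ∀ i, X i ∈ K := by
    intro i
    show φ (X i) = 0
    simpa [hφ, hX] using hrel' i
  have hXnull : ∀ n, {i | X i ∉ (b ^ n • ⊤ : Submodule B (Fin m → B))}.Finite := by
    intro n
    have h3 : {i | X i ∉ (b ^ n • ⊤ : Submodule B (Fin m → B))} ⊆
        ⋃ (u : Fin m), {i | (((ε u).1.2 : ι → B) i).val n ≠ 0} := by
      intro i hi
      by_contra hc
      simp only [Set.mem_iUnion, Set.mem_setOf_eq, not_exists, not_not] at hc
      apply hi
      refine pi_mem_smul_top (b ^ n) (X i) fun u ↦ ?_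
      exact mem_pow_map_of_val_eq_zero a ha n (hc u)
    refine Set.Finite.subset (Set.finite_iUnion
      (f := fun u : Fin m ↦ {i | (((ε u).1.2 : ι → B) i).val n ≠ 0})
      (fun u ↦ (ε u).1.2.2 n)) h3
  -- main pointwise construction
  have main : ∀ i, ∃ c : Fin s → B, (X i = ∑ t, c t • gK t) ∧
      ∀ n, X i ∈ (b ^ (n + k) • ⊤ : Submodule B (Fin m → B)) →
        ∀ t, (c t).val n = 0 := by
    intro i
    by_cases hcase : ∀ n : ℕ, X i ∈ (b ^ n • ⊤ : Submodule B (Fin m → B))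
    · have hX0 : X i = 0 := by
        funext u
        apply AdicCompletion.ext
        intro n
        have h4 : X i u ∈ b ^ n :=
          apply_mem_of_mem_smul_top (b ^ n) (LinearMap.proj u) (hcase n)
        simpa using val_eq_zero_of_mem a h4
      exact ⟨0, by simp [hX0], fun n _ t ↦ by simp [AdicCompletion.val_zero]⟩
    · push_neg at hcase
      set N := Nat.find hcase with hN
      have hNspec : X i ∉ (b ^ N • ⊤ : Submodule B (Fin m → B)) := Nat.find_spec hcase
      have hN0 : 0 < N := by
        rw [hN]
        refine (Nat.find_pos hcase).mpr fun hc ↦ hc ?_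
        rw [pow_zero, Ideal.one_eq_top, top_smul]
        trivial
      have hmem : X i ∈ (b ^ (N - 1) • ⊤ : Submodule B (Fin m → B)) := by
        by_contra hc
        exact Nat.find_min hcase (Nat.sub_lt hN0 one_pos) hc
      have hKmem : X i ∈ (b ^ ((N - 1) - k) • K : Submodule B (Fin m → B)) := by
        rcases le_or_gt k (N - 1) with h | h
        · have h5 := hAR (N - 1) h
          have h6 : X i ∈ (b ^ (N - 1) • ⊤ ⊓ K : Submodule B (Fin m → B)) :=
            ⟨hmem, hXK i⟩
          rw [h5] at h6
          exact Submodule.smul_mono le_rfl inf_le_right h6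
        · have h7 : (N - 1) - k = 0 := by omega
          rw [h7, pow_zero, Ideal.one_eq_top, top_smul]
          exact hXK i
      obtain ⟨c, hc1, hc2⟩ := exists_coeff_of_mem_smul_span (b ^ ((N - 1) - k)) gK
        (by rw [hgK]; exact hKmem)
      refine ⟨c, hc2, ?_⟩
      intro n hn t
      have hlt : n + k < N := by
        by_contra hge
        push_neg at hge
        exact hNspec (Submodule.smul_mono (Ideal.pow_le_pow_right hge) le_rfl hn)
      have hle : c t ∈ b ^ n :=
        Ideal.pow_le_pow_right (by omega) (hc1 t)
      exact val_eq_zero_of_mem a hle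
  choose c hcX hcnull using main
  set y : Fin s → nullSubmodule a ι := fun t ↦
    ⟨fun i ↦ c i t, by
      intro n
      refine (hXnull (n + k)).subset fun i hi ↦ ?_
      exact fun hmem ↦ hi (hcnull i n hmem t)⟩ with hy
  have hxp : ∀ u : Fin m, ((ε u).1.2 : nullSubmodule a ι) = ∑ t, (gK t u) • y t := by
    intro u
    apply Subtype.ext
    funext i
    have h8 := congrFun (hcX i) u
    simp only [Finset.sum_apply, Pi.smul_apply, smul_eq_mul] at h8
    have h9 : ((∑ t, (gK t u) • y t : nullSubmodule a ι) : ι → B) i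
        = ∑ t, (gK t u) * c i t := by
      rw [Submodule.coe_sum, Finset.sum_apply]
      exact Finset.sum_congr rfl fun t _ ↦ rfl
    rw [h9]
    rw [show (((ε u).1.2 : nullSubmodule a ι) : ι → B) i = X i u from rfl, h8]
    exact Finset.sum_congr rfl fun t _ ↦ mul_comm _ _
  -- conclude
  rw [hzS]
  have h10 : ∀ u : Fin m,
      ((ε u).1.1 ⊗ₜ[B] ((ε u).1.2 : nullSubmodule a ι))
        = ∑ t, ((gK t u) • (ε u).1.1) ⊗ₜ[B] y t := by
    intro u
    rw [hxp u, TensorProduct.tmul_sum]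
    exact Finset.sum_congr rfl fun t _ ↦ (TensorProduct.smul_tmul _ _ _).symm
  rw [Finset.sum_congr rfl fun u _ ↦ h10 u, Finset.sum_comm]
  refine Finset.sum_eq_zero fun t _ ↦ ?_
  rw [← TensorProduct.sum_tmul]
  have h11 : (∑ u : Fin m, (gK t u) • (ε u).1.1) = 0 := by
    apply Subtype.ext
    have h12 : ((∑ u : Fin m, (gK t u) • (ε u).1.1 : J) : B)
        = ∑ u : Fin m, (gK t u) * ((ε u).1.1 : B) := by
      rw [Submodule.coe_sum]
      exact Finset.sum_congr rfl fun u _ ↦ rfl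
    rw [h12]
    have h13 : φ (gK t) = 0 := hgKmem t
    simp only [hφ, LinearMap.coe_mk, AddHom.coe_mk] at h13
    rw [show (0 : J).1 = (0 : B) from rfl, ← h13]
    exact Finset.sum_congr rfl fun u _ ↦ mul_comm _ _
  rw [h11, TensorProduct.zero_tmul]


section Equiv

variable {ι : Type*}

/-- Coordinate map on the quotients. -/
noncomputable def coordQ (n : ℕ) (i : ι) :
    ((ι →₀ A) ⧸ (a ^ n • ⊤ : Submodule A (ι →₀ A))) →ₗ[A] (A ⧸ (a ^ n • ⊤ : Submodule A A)) :=
  Submodule.mapQ _ _ (Finsupp.lapply i) (by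
    rw [← Submodule.map_le_iff_le_comap, Submodule.map_smul'']
    exact Submodule.smul_mono le_rfl le_top)

theorem coordQ_mk (n : ℕ) (i : ι) (g : ι →₀ A) :
    coordQ a n i (Submodule.Quotient.mk g) = Submodule.Quotient.mk (g i) := by
  simp [coordQ, Submodule.mapQ_apply]

theorem coordQ_transition {m n : ℕ} (hmn : m ≤ n) (i : ι)
    (w : (ι →₀ A) ⧸ (a ^ n • ⊤ : Submodule A (ι →₀ A))) :
    AdicCompletion.transitionMap a A hmn (coordQ a n i w) =
      coordQ a m i (AdicCompletion.transitionMap a (ι →₀ A) hmn w) := by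
  obtain ⟨g, rfl⟩ := Submodule.Quotient.mk_surjective _ w
  rw [coordQ_mk, Submodule.mapQ_apply, LinearMap.id_apply, Submodule.mapQ_apply, LinearMap.id_apply, coordQ_mk]

theorem coordQ_qsmul (n : ℕ) (i : ι) (r : A ⧸ (a ^ n • ⊤ : Ideal A))
    (w : (ι →₀ A) ⧸ (a ^ n • ⊤ : Submodule A (ι →₀ A))) :
    coordQ a n i (r • w) = r * coordQ a n i w := by
  obtain ⟨r', rfl⟩ := Ideal.Quotient.mk_surjective r
  obtain ⟨g, rfl⟩ := Submodule.Quotient.mk_surjective _ w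
  rw [AdicCompletion.mk_smul_mk, ← Submodule.Quotient.mk_smul, coordQ_mk, coordQ_mk]
  have h1 : (r' • g) i = r' * g i := by simp
  rw [h1]
  show (Ideal.Quotient.mk (a ^ n • ⊤ : Ideal A)) (r' * g i)
      = (Ideal.Quotient.mk (a ^ n • ⊤ : Ideal A) r') * (Ideal.Quotient.mk (a ^ n • ⊤ : Ideal A) (g i))
  exact map_mul _ _ _

/-- The coordinate sequence of an element of the completion of a free module. -/
noncomputable def toSeq (v : AdicCompletion a (ι →₀ A)) (i : ι) : AdicCompletion a A :=
  ⟨fun n ↦ coordQ a n i (v.val n), fun {m n} hmn ↦ by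
    rw [coordQ_transition a hmn i (v.val n), v.property hmn]⟩

theorem toSeq_val (v : AdicCompletion a (ι →₀ A)) (i : ι) (n : ℕ) :
    (toSeq a v i).val n = coordQ a n i (v.val n) := rfl

/-- The canonical linear map from the completion of a free module to null families. -/
noncomputable def toPi : AdicCompletion a (ι →₀ A) →ₗ[AdicCompletion a A] (ι → AdicCompletion a A) where
  toFun v := fun i ↦ toSeq a v i
  map_add' v w := by
    funext i
    apply AdicCompletion.ext
    intro n
    show coordQ a n i ((v + w).val n) = (toSeq a v i + toSeq a w i).val n
    rw [AdicCompletion.val_add_apply, map_add, AdicCompletion.val_add_apply]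
    rfl
  map_smul' r v := by
    funext i
    apply AdicCompletion.ext
    intro n
    show coordQ a n i ((r • v).val n) = ((r • fun i ↦ toSeq a v i) i).val n
    have h1 : ((r • fun i ↦ toSeq a v i) i) = r * toSeq a v i := rfl
    rw [h1, AdicCompletion.val_mul, AdicCompletion.smul_eval, coordQ_qsmul]
    rfl

theorem toPi_injective : Function.Injective (toPi a (ι := ι)) := by
  intro v w hvw
  have h : ∀ i, toSeq a v i = toSeq a w i := fun i ↦ congrFun hvw i
  apply AdicCompletion.ext
  intro n
  obtain ⟨g, hg⟩ := Submodule.Quotient.mk_surjective _ (v.val n)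
  obtain ⟨g', hg'⟩ := Submodule.Quotient.mk_surjective _ (w.val n)
  rw [← hg, ← hg', Submodule.Quotient.eq]
  refine finsupp_mem_smul_top (a ^ n) _ fun i ↦ ?_
  have h2 : coordQ a n i (v.val n) = coordQ a n i (w.val n) := by
    rw [← toSeq_val, ← toSeq_val, h i]
  rw [← hg, ← hg', coordQ_mk, coordQ_mk] at h2
  have h3 : (g - g') i = g i - g' i := rfl
  have h4 : g i - g' i ∈ (a ^ n • ⊤ : Submodule A A) := by
    rw [← Submodule.Quotient.eq]
    exact h2
  rw [smul_top_ideal] at h4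
  rw [h3]
  exact h4


theorem toPi_mem_nullSubmodule (v : AdicCompletion a (ι →₀ A)) :
    toPi a v ∈ nullSubmodule a ι := by
  intro n
  obtain ⟨g, hg⟩ := Submodule.Quotient.mk_surjective _ (v.val n)
  refine Set.Finite.subset g.support.finite_toSet fun i hi ↦ ?_
  by_contra hc
  apply hi
  show (toSeq a v i).val n = 0
  rw [toSeq_val, ← hg, coordQ_mk]
  have h1 : g i = 0 := by
    by_contra h2
    exact hc (Finsupp.mem_support_iff.mpr h2)
  rw [h1]
  exact (Submodule.Quotient.mk_eq_zero _).mpr (zero_mem _)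

theorem range_toPi : LinearMap.range (toPi a (ι := ι)) = nullSubmodule a ι := by
  classical
  apply le_antisymm
  · rintro _ ⟨v, rfl⟩
    exact toPi_mem_nullSubmodule a v
  · intro x hx
    -- construct a preimage
    set h : ℕ → ι → A := fun n i ↦
      if hz : (x i).val n = 0 then 0
      else (Submodule.Quotient.mk_surjective (a ^ n • ⊤ : Submodule A A) ((x i).val n)).choose
      with hh
    have hmk : ∀ n i, (Submodule.Quotient.mk (h n i) : A ⧸ (a ^ n • ⊤ : Submodule A A))
        = (x i).val n := by
      intro n i
      by_cases hz : (x i).val n = 0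
      · simp only [hh, hz, dif_pos]
        exact (Submodule.Quotient.mk_eq_zero _).mpr (zero_mem _)
      · simp only [hh, hz, dif_neg, not_false_iff]
        exact (Submodule.Quotient.mk_surjective _ ((x i).val n)).choose_spec
    set w : ℕ → ι →₀ A := fun n ↦ Finsupp.onFinset (hx n).toFinset (h n) (fun i hi ↦ by
      rw [Set.Finite.mem_toFinset]
      intro hc
      apply hi
      simp only [hh, Set.mem_setOf_eq] at hc ⊢
      rw [dif_pos hc]) with hw
    have hwa : ∀ n i, w n i = h n i := fun n i ↦ rfl
    have hcompat : ∀ {m n : ℕ} (hmn : m ≤ n),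
        AdicCompletion.transitionMap a (ι →₀ A) hmn (Submodule.Quotient.mk (w n))
          = Submodule.Quotient.mk (w m) := by
      intro m n hmn
      rw [Submodule.mapQ_apply, LinearMap.id_apply, Submodule.Quotient.eq]
      refine finsupp_mem_smul_top (a ^ m) _ fun i ↦ ?_
      have h1 : (Submodule.Quotient.mk (h n i) : A ⧸ (a ^ m • ⊤ : Submodule A A))
          = (x i).val m := by
        have h2 := congrArg (AdicCompletion.transitionMap a A hmn) (hmk n i)
        rw [Submodule.mapQ_apply, LinearMap.id_apply, (x i).property hmn] at h2
        exact h2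
      have h3 : (w n - w m) i = h n i - h m i := by
        rw [Finsupp.sub_apply, hwa, hwa]
      rw [h3]
      have h4 : h n i - h m i ∈ (a ^ m • ⊤ : Submodule A A) := by
        rw [← Submodule.Quotient.eq]
        rw [h1, hmk m i]
      rw [smul_top_ideal] at h4
      exact h4
    refine ⟨⟨fun n ↦ Submodule.Quotient.mk (w n), fun {m n} hmn ↦ hcompat hmn⟩, ?_⟩
    funext i
    apply AdicCompletion.ext
    intro n
    show coordQ a n i (Submodule.Quotient.mk (w n)) = (x i).val n
    rw [coordQ_mk, hwa, hmk]

end Equiv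

end AdicFlat

/-- Let `(A, a)` be a preadic ring such that `Λ_a(A)` is noetherian.  If `P` is
a projective `A`-module, then the `a`-adic completion `Λ_a(P)` is a flat
`Λ_a(A)`-module. -/
theorem adicCompletion_flat_of_projective
    {A : Type*} [CommRing A] (a : Ideal A) (ha : a.FG)
    [IsNoetherianRing (AdicCompletion a A)]
    (P : Type*) [AddCommGroup P] [Module A P] [Module.Projective A P] :
    Module.Flat (AdicCompletion a A) (AdicCompletion a P) := by
  classical
  obtain ⟨s, hs⟩ := Module.projective_def'.mp (inferInstance : Module.Projective A P)
  have hflatL : Module.Flat (AdicCompletion a A) (AdicFlat.nullSubmodule a P) :=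
    AdicFlat.flat_nullSubmodule a P ha
  let e : AdicCompletion a (P →₀ A) ≃ₗ[AdicCompletion a A] (AdicFlat.nullSubmodule a P) :=
    (LinearEquiv.ofInjective (AdicFlat.toPi a) (AdicFlat.toPi_injective a)).trans
      (LinearEquiv.ofEq _ _ (AdicFlat.range_toPi a))
  have hflatF : Module.Flat (AdicCompletion a A) (AdicCompletion a (P →₀ A)) :=
    Module.Flat.of_linearEquiv e
  refine Module.Flat.of_retract (AdicCompletion.map a s)
    (AdicCompletion.map a (Finsupp.linearCombination A id)) ?_
  rw [AdicCompletion.map_comp, hs, AdicCompletion.map_id]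
end
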